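/- arXiv:2308.07904 — 10 statements merged into one kernel-verified Lean document; each statement's English description precedes it below -/
import Mathlib

section
/- Let G be a subgroup of S₅ = Equiv.Perm (Fin 5), acting on D by permuting coordinates, and let n be the number of orbits of G on Fin 5. Then the subgroup of G-fixed points {a ∈ D | σ • a = a for all σ ∈ G} has exactly 2^(n−1) elements. -/
open MulAction

section Aux

variable (G : Subgroup (Equiv.Perm (Fin 5)))

/-- invariant functions correspond to functions on the orbit quotient -/
noncomputable def invEquiv :
    {a : Fin 5 → ZMod 2 // ∀ σ : Equiv.Perm (Fin 5), σ ∈ G → a ∘ ⇑σ⁻¹ = a} ≃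
      (Quotient (MulAction.orbitRel G (Fin 5)) → ZMod 2) where
  toFun p := Quotient.lift p.1 (by
    intro x y (h : x ∈ MulAction.orbit G y)
    obtain ⟨g, rfl⟩ := h
    have h1 : (g : Equiv.Perm (Fin 5))⁻¹ ∈ G := inv_mem g.2
    have := congrFun (p.2 _ h1) y
    simpa [Subgroup.smul_def, Equiv.Perm.smul_def] using this)
  invFun f := ⟨f ∘ Quotient.mk _, by
    intro σ hσ
    funext x
    have : (⟦σ⁻¹ x⟧ : Quotient (MulAction.orbitRel G (Fin 5))) = ⟦x⟧ := by
      apply Quotient.sound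
      exact ⟨⟨σ, hσ⟩⁻¹, rfl⟩
    simpa using congrArg f this⟩
  left_inv p := by
    ext x
    rfl
  right_inv f := by
    funext q
    induction q using Quotient.ind
    rfl

end Aux

/-- Let `G ≤ S₅` act on
`D = {a : Fin 5 → ZMod 2 | a 0 + a 1 + a 2 + a 3 + a 4 = 0}` by permuting
coordinates, and let `n` be the number of orbits of `G` on `Fin 5`.  Then the
fixed-point subgroup `{a ∈ D | ∀ σ ∈ G, a ∘ σ⁻¹ = a}` has exactly `2 ^ (n - 1)`
elements. -/
theorem card_fixed_points_eq_two_pow (G : Subgroup (Equiv.Perm (Fin 5))) :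
    Nat.card {a : Fin 5 → ZMod 2 //
        (a 0 + a 1 + a 2 + a 3 + a 4 = 0) ∧
        ∀ σ : Equiv.Perm (Fin 5), σ ∈ G → a ∘ ⇑σ⁻¹ = a} =
      2 ^ (Nat.card (MulAction.orbitRel.Quotient G (Fin 5)) - 1) := by
  classical
  set Q := Quotient (MulAction.orbitRel G (Fin 5)) with hQ
  have hQcard : Nat.card (MulAction.orbitRel.Quotient G (Fin 5)) = Nat.card Q := rfl
  rw [hQcard]
  set n := Nat.card Q with hn
  -- the sum functional on Q → ZMod 2
  set P : (Q → ZMod 2) → Prop :=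
    fun f => f ⟦0⟧ + f ⟦1⟧ + f ⟦2⟧ + f ⟦3⟧ + f ⟦4⟧ = 0 with hP
  -- step 1: reduce to counting {f // P f}
  have e1 : {a : Fin 5 → ZMod 2 //
        (a 0 + a 1 + a 2 + a 3 + a 4 = 0) ∧
        ∀ σ : Equiv.Perm (Fin 5), σ ∈ G → a ∘ ⇑σ⁻¹ = a} ≃ {f : Q → ZMod 2 // P f} :=
    { toFun := fun x => ⟨invEquiv G ⟨x.1, x.2.2⟩, by
        simpa [hP, invEquiv] using x.2.1⟩
      invFun := fun p => ⟨((invEquiv G).symm p.1).1, by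
        constructor
        · have := p.2
          simp only [hP] at this
          simpa [invEquiv] using this
        · exact ((invEquiv G).symm p.1).2⟩
      left_inv := fun x => by
        ext i
        simp [invEquiv]
      right_inv := fun p => by
        ext q
        simp }
  rw [Nat.card_congr e1]
  -- step 2: complement bijection via adding the constant-one function
  have hadd : ∀ f : Q → ZMod 2, P (f + 1) ↔ ¬ P f := by
    intro f
    simp only [hP, Pi.add_apply, Pi.one_apply]
    have h5 : ∀ a : ZMod 2,
        (a + 1 + 1 + 1 + 1 + 1 = 0 ↔ ¬ a = 0) := by decide
    constructor
    · intro h hc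
      have : f ⟦0⟧ + f ⟦1⟧ + f ⟦2⟧ + f ⟦3⟧ + f ⟦4⟧ + 1 + 1 + 1 + 1 + 1 = 0 := by
        rw [← h]; ring
      exact (h5 _).1 this hc
    · intro h
      have := (h5 (f ⟦0⟧ + f ⟦1⟧ + f ⟦2⟧ + f ⟦3⟧ + f ⟦4⟧)).2 h
      rw [← this]; ring
  have hinvol : ∀ f : Q → ZMod 2, f + 1 + 1 = f := by
    intro f; funext q
    show f q + 1 + 1 = f q
    rw [add_assoc, show (1 : ZMod 2) + 1 = 0 from rfl, add_zero]
  have e2 : {f : Q → ZMod 2 // P f} ≃ {f : Q → ZMod 2 // ¬ P f} :=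
    { toFun := fun p => ⟨p.1 + 1, by
        have h := hadd (p.1 + 1)
        rw [hinvol] at h
        exact h.1 p.2⟩
      invFun := fun p => ⟨p.1 + 1, (hadd p.1).2 p.2⟩
      left_inv := fun p => by
        ext q; exact congrFun (hinvol p.1) q
      right_inv := fun p => by
        ext q; exact congrFun (hinvol p.1) q }
  have hsplit : Nat.card {f : Q → ZMod 2 // P f} + Nat.card {f : Q → ZMod 2 // ¬ P f}
      = Nat.card (Q → ZMod 2) := by
    rw [← Nat.card_sum]
    exact Nat.card_congr (Equiv.sumCompl P)
  have htot : Nat.card (Q → ZMod 2) = 2 ^ n := by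
    rw [Nat.card_fun, Nat.card_eq_fintype_card (α := ZMod 2), ZMod.card]
  have hpos : 1 ≤ n := Nat.one_le_iff_ne_zero.2 (by
    have : Nonempty Q := ⟨⟦0⟧⟩
    exact Nat.card_ne_zero.2 ⟨this, inferInstance⟩)
  have hsame : Nat.card {f : Q → ZMod 2 // ¬ P f} = Nat.card {f : Q → ZMod 2 // P f} :=
    (Nat.card_congr e2).symm
  have hpow : 2 ^ n = 2 ^ (n - 1) * 2 := by
    conv_lhs => rw [show n = (n - 1) + 1 from (Nat.succ_pred_eq_of_pos hpos).symm]
    rw [pow_succ]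
  omega
end

section
/- Let T := ⟨c₁, c₂, c₃⟩ be the subgroup of D generated by c₁, c₂, c₃ (a subgroup of order 8), and let σ = (123) act on D by permuting coordinates. The nontrivial subgroups H of T that are invariant under σ (i.e. σ • h ∈ H for all h ∈ H) are exactly the following three: ⟨c₄ + c₅⟩, ⟨c₁ + c₂, c₂ + c₃⟩, and T itself. (Note c₄ + c₅ = c₁ + c₂ + c₃.) -/
/-- The group `D = {a : (ℤ/2)⁵ | a 0 + a 1 + a 2 + a 3 + a 4 = 0}`. -/
def Dcar : AddSubgroup (Fin 5 → ZMod 2) where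
  carrier := {a | a 0 + a 1 + a 2 + a 3 + a 4 = 0}
  zero_mem' := by simp
  add_mem' := by
    intro a b ha hb
    simp only [Set.mem_setOf_eq, Pi.add_apply] at *
    linear_combination ha + hb
  neg_mem' := by
    intro a ha
    simp only [Set.mem_setOf_eq, Pi.neg_apply] at *
    linear_combination -ha

lemma mem_Dcar {a : Fin 5 → ZMod 2} : a ∈ Dcar ↔ ∑ i, a i = 0 := by
  simp [Dcar, Fin.sum_univ_five]

/-- Permutation of the coordinates (`σ • a = a ∘ σ⁻¹`) as an additive
automorphism of `D`. -/
def dperm (σ : Equiv.Perm (Fin 5)) : Dcar ≃+ Dcar where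
  toFun a := ⟨(a : Fin 5 → ZMod 2) ∘ σ.symm, by
    rw [mem_Dcar]
    have := mem_Dcar.mp a.2
    simpa [Function.comp] using (Equiv.sum_comp σ.symm (a : Fin 5 → ZMod 2)).trans this⟩
  invFun a := ⟨(a : Fin 5 → ZMod 2) ∘ σ, by
    rw [mem_Dcar]
    have := mem_Dcar.mp a.2
    simpa [Function.comp] using (Equiv.sum_comp σ (a : Fin 5 → ZMod 2)).trans this⟩
  left_inv a := by ext j; simp
  right_inv a := by ext j; simp
  map_add' a b := by ext j; simp

/-- The action of `S₅` on `Multiplicative D` by permuting coordinates. -/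
def S5toAut : Equiv.Perm (Fin 5) →* MulAut (Multiplicative Dcar) where
  toFun σ := AddEquiv.toMultiplicative (dperm σ)
  map_one' := by ext a; rfl
  map_mul' σ τ := by ext a; rfl

/-- The Weyl group `W(D₅) = D ⋊ S₅`. -/
abbrev W := SemidirectProduct (Multiplicative Dcar) (Equiv.Perm (Fin 5)) S5toAut

/-- The generators `cᵢ` of `D`: zero in coordinate `i`, one elsewhere.
(Coordinates `1,…,5` are indexed by `0,…,4 : Fin 5`.) -/
def c (i : Fin 5) : Dcar :=
  ⟨fun j => if j = i then 0 else 1, by rw [mem_Dcar]; fin_cases i <;> decide⟩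

/-- The element `(a, σ)` of `W = D ⋊ S₅`. -/
def w (a : Dcar) (σ : Equiv.Perm (Fin 5)) : W := ⟨Multiplicative.ofAdd a, σ⟩

/-- The 3-cycle `(123)` (on coordinates labelled `1,…,5`). -/
def σ123 : Equiv.Perm (Fin 5) := Equiv.swap 0 1 * Equiv.swap 1 2

lemma mem_T_iff' (x : Dcar) :
    x ∈ AddSubgroup.closure ({c 0, c 1, c 2} : Set Dcar) ↔
      x = 0 ∨ x = c 0 ∨ x = c 1 ∨ x = c 2 ∨ x = c 0 + c 1 ∨ x = c 0 + c 2 ∨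
        x = c 1 + c 2 ∨ x = c 0 + c 1 + c 2 := by
  constructor
  · intro hx
    induction hx using AddSubgroup.closure_induction with
    | mem y hy => rcases hy with rfl | rfl | rfl <;> decide
    | zero => left; rfl
    | add x y hx hy ihx ihy =>
      rcases ihx with rfl|rfl|rfl|rfl|rfl|rfl|rfl|rfl <;>
        rcases ihy with rfl|rfl|rfl|rfl|rfl|rfl|rfl|rfl <;> decide
    | neg x hx ihx => rcases ihx with rfl|rfl|rfl|rfl|rfl|rfl|rfl|rfl <;> decide
  · have h0 : c 0 ∈ AddSubgroup.closure ({c 0, c 1, c 2} : Set Dcar) := AddSubgroup.subset_closure (Set.mem_insert _ _)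
    have h1 : c 1 ∈ AddSubgroup.closure ({c 0, c 1, c 2} : Set Dcar) := AddSubgroup.subset_closure (Set.mem_insert_of_mem _ (Set.mem_insert _ _))
    have h2 : c 2 ∈ AddSubgroup.closure ({c 0, c 1, c 2} : Set Dcar) := AddSubgroup.subset_closure (Set.mem_insert_of_mem _ (Set.mem_insert_of_mem _ rfl))
    rintro (rfl|rfl|rfl|rfl|rfl|rfl|rfl|rfl)
    exacts [zero_mem _, h0, h1, h2, add_mem h0 h1, add_mem h0 h2, add_mem h1 h2,
      add_mem (add_mem h0 h1) h2]

lemma mem_S2_iff' (x : Dcar) :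
    x ∈ AddSubgroup.closure ({c 0 + c 1, c 1 + c 2} : Set Dcar) ↔
      x = 0 ∨ x = c 0 + c 1 ∨ x = c 1 + c 2 ∨ x = c 0 + c 2 := by
  constructor
  · intro hx
    induction hx using AddSubgroup.closure_induction with
    | mem y hy => rcases hy with rfl | rfl <;> decide
    | zero => left; rfl
    | add x y hx hy ihx ihy =>
      rcases ihx with rfl|rfl|rfl|rfl <;> rcases ihy with rfl|rfl|rfl|rfl <;> decide
    | neg x hx ihx => rcases ihx with rfl|rfl|rfl|rfl <;> decide
  · have h0 : c 0 + c 1 ∈ AddSubgroup.closure ({c 0 + c 1, c 1 + c 2} : Set Dcar) :=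
      AddSubgroup.subset_closure (Set.mem_insert _ _)
    have h1 : c 1 + c 2 ∈ AddSubgroup.closure ({c 0 + c 1, c 1 + c 2} : Set Dcar) :=
      AddSubgroup.subset_closure (Set.mem_insert_of_mem _ rfl)
    rintro (rfl|rfl|rfl|rfl)
    exacts [zero_mem _, h0, h1, by
      have : c 0 + c 2 = (c 0 + c 1) + (c 1 + c 2) := by decide
      rw [this]; exact add_mem h0 h1]

lemma mem_S1_iff' (x : Dcar) :
    x ∈ AddSubgroup.closure ({c 3 + c 4} : Set Dcar) ↔ x = 0 ∨ x = c 3 + c 4 := by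
  constructor
  · intro hx
    induction hx using AddSubgroup.closure_induction with
    | mem y hy => rcases hy with rfl; decide
    | zero => left; rfl
    | add x y hx hy ihx ihy => rcases ihx with rfl|rfl <;> rcases ihy with rfl|rfl <;> decide
    | neg x hx ihx => rcases ihx with rfl|rfl <;> decide
  · rintro (rfl|rfl)
    exacts [zero_mem _, AddSubgroup.subset_closure rfl]

/-- Let `T = ⟨c₁, c₂, c₃⟩ ≤ D` and let `σ = (123)` act on `D`
by permuting coordinates.  The nontrivial subgroups of `T` invariant under `σ`
are exactly `⟨c₄ + c₅⟩`, `⟨c₁ + c₂, c₂ + c₃⟩`, and `T` itself. -/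
theorem invariant_subgroups_of_T (H : AddSubgroup Dcar) :
    (H ≤ AddSubgroup.closure ({c 0, c 1, c 2} : Set Dcar) ∧ H ≠ ⊥ ∧
        ∀ h ∈ H, dperm σ123 h ∈ H) ↔
      (H = AddSubgroup.closure ({c 3 + c 4} : Set Dcar) ∨
        H = AddSubgroup.closure ({c 0 + c 1, c 1 + c 2} : Set Dcar) ∨
        H = AddSubgroup.closure ({c 0, c 1, c 2} : Set Dcar)) := by
  have e0 : dperm σ123 (c 0) = c 1 := by decide
  have e1 : dperm σ123 (c 1) = c 2 := by decide
  have e2 : dperm σ123 (c 2) = c 0 := by decide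
  have e01 : dperm σ123 (c 0 + c 1) = c 1 + c 2 := by decide
  have e12 : dperm σ123 (c 1 + c 2) = c 0 + c 2 := by decide
  have e02 : dperm σ123 (c 0 + c 2) = c 0 + c 1 := by decide
  have es : dperm σ123 (c 3 + c 4) = c 3 + c 4 := by decide
  have hs : c 3 + c 4 = c 0 + c 1 + c 2 := by decide
  constructor
  · rintro ⟨hle, hne, hinv⟩
    by_cases hc : c 0 ∈ H ∨ c 1 ∈ H ∨ c 2 ∈ H
    · -- H = T
      right; right
      have hall : c 0 ∈ H ∧ c 1 ∈ H ∧ c 2 ∈ H := by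
        rcases hc with h | h | h
        · have h1 := hinv _ h; rw [e0] at h1
          have h2 := hinv _ h1; rw [e1] at h2
          exact ⟨h, h1, h2⟩
        · have h2 := hinv _ h; rw [e1] at h2
          have h0 := hinv _ h2; rw [e2] at h0
          exact ⟨h0, h, h2⟩
        · have h0 := hinv _ h; rw [e2] at h0
          have h1 := hinv _ h0; rw [e0] at h1
          exact ⟨h0, h1, h⟩
      refine le_antisymm hle (AddSubgroup.closure_le _ |>.mpr ?_)
      rintro x (rfl | rfl | rfl)
      exacts [hall.1, hall.2.1, hall.2.2]
    · push_neg at hc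
      obtain ⟨n0, n1, n2⟩ := hc
      by_cases hp : c 0 + c 1 ∈ H ∨ c 1 + c 2 ∈ H ∨ c 0 + c 2 ∈ H
      · -- H = S2
        right; left
        have hall : c 0 + c 1 ∈ H ∧ c 1 + c 2 ∈ H ∧ c 0 + c 2 ∈ H := by
          rcases hp with h | h | h
          · have h1 := hinv _ h; rw [e01] at h1
            have h2 := hinv _ h1; rw [e12] at h2
            exact ⟨h, h1, h2⟩
          · have h2 := hinv _ h; rw [e12] at h2
            have h0 := hinv _ h2; rw [e02] at h0
            exact ⟨h0, h, h2⟩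
          · have h0 := hinv _ h; rw [e02] at h0
            have h1 := hinv _ h0; rw [e01] at h1
            exact ⟨h0, h1, h⟩
        refine le_antisymm ?_ (AddSubgroup.closure_le _ |>.mpr ?_)
        · intro x hx
          rw [mem_S2_iff']
          rcases (mem_T_iff' x).mp (hle hx) with rfl|rfl|rfl|rfl|rfl|rfl|rfl|rfl
          · left; rfl
          · exact absurd hx n0
          · exact absurd hx n1
          · exact absurd hx n2
          · right; left; rfl
          · right; right; right; rfl
          · right; right; left; rfl
          · exfalso
            have : c 2 = (c 0 + c 1 + c 2) + (c 0 + c 1) := by decide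
            exact n2 (this ▸ add_mem hx hall.1)
        · rintro x (rfl | rfl)
          exacts [hall.1, hall.2.1]
      · -- H = S1
        left
        push_neg at hp
        obtain ⟨p0, p1, p2⟩ := hp
        have hmem : ∀ x ∈ H, x = 0 ∨ x = c 3 + c 4 := by
          intro x hx
          rcases (mem_T_iff' x).mp (hle hx) with rfl|rfl|rfl|rfl|rfl|rfl|rfl|rfl
          · left; rfl
          · exact absurd hx n0
          · exact absurd hx n1
          · exact absurd hx n2
          · exact absurd hx p0
          · exact absurd hx p2
          · exact absurd hx p1
          · right; exact hs.symm
        refine le_antisymm (fun x hx => (mem_S1_iff' x).mpr (hmem x hx))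
          (AddSubgroup.closure_le _ |>.mpr ?_)
        rintro x (rfl : x = c 3 + c 4)
        obtain ⟨⟨y, hy⟩, hy0⟩ := AddSubgroup.ne_bot_iff_exists_ne_zero.mp hne
        rcases hmem y hy with rfl | rfl
        · exact absurd (Subtype.ext rfl) hy0
        · exact hy
  · rintro (rfl | rfl | rfl) <;> refine ⟨AddSubgroup.closure_le _ |>.mpr ?_, ?_, ?_⟩
    · rintro x (rfl : x = _); exact (mem_T_iff' _).mpr (by decide)
    · intro hbot
      have : c 3 + c 4 ∈ (⊥ : AddSubgroup Dcar) := hbot ▸ AddSubgroup.subset_closure rfl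
      exact absurd (AddSubgroup.mem_bot.mp this) (by decide)
    · intro h hh
      rcases (mem_S1_iff' h).mp hh with rfl | rfl
      · rw [map_zero]; exact zero_mem _
      · rw [es]; exact hh
    · rintro x (rfl | rfl) <;> exact (mem_T_iff' _).mpr (by decide)
    · intro hbot
      have : c 0 + c 1 ∈ (⊥ : AddSubgroup Dcar) :=
        hbot ▸ AddSubgroup.subset_closure (Set.mem_insert _ _)
      exact absurd (AddSubgroup.mem_bot.mp this) (by decide)
    · intro h hh
      rw [mem_S2_iff'] at hh ⊢
      rcases hh with rfl | rfl | rfl | rfl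
      · rw [map_zero]; left; rfl
      · rw [e01]; right; right; left; rfl
      · rw [e12]; right; right; right; rfl
      · rw [e02]; right; left; rfl
    · rintro x (rfl | rfl | rfl) <;> exact (mem_T_iff' _).mpr (by decide)
    · intro hbot
      have : c 0 ∈ (⊥ : AddSubgroup Dcar) :=
        hbot ▸ AddSubgroup.subset_closure (Set.mem_insert _ _)
      exact absurd (AddSubgroup.mem_bot.mp this) (by decide)
    · intro h hh
      rw [mem_T_iff'] at hh ⊢
      rcases hh with rfl | rfl | rfl | rfl | rfl | rfl | rfl | rfl
      · rw [map_zero]; left; rfl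
      · rw [e0]; exact Or.inr (Or.inr (Or.inl rfl))
      · rw [e1]; exact Or.inr (Or.inr (Or.inr (Or.inl rfl)))
      · rw [e2]; exact Or.inr (Or.inl rfl)
      · rw [e01]; exact Or.inr (Or.inr (Or.inr (Or.inr (Or.inr (Or.inr (Or.inl rfl))))))
      · rw [e02]; exact Or.inr (Or.inr (Or.inr (Or.inr (Or.inl rfl))))
      · rw [e12]; exact Or.inr (Or.inr (Or.inr (Or.inr (Or.inr (Or.inl rfl)))))
      · rw [← hs, es, hs]
        exact Or.inr (Or.inr (Or.inr (Or.inr (Or.inr (Or.inr (Or.inr rfl))))))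
end

section
/- Let σ = (123) ∈ S₅. The four cyclic subgroups of W generated respectively by (c₄ + c₅, σ), (c₁, σ), (c₂, σ), and (c₃, σ) are pairwise conjugate in W. -/
lemma w_mul_left (b a : Dcar) (σ : Equiv.Perm (Fin 5)) :
    w b 1 * w a σ = w (b + a) σ := by
  unfold w; ext <;> rfl

lemma w_mul_right (a b : Dcar) (σ : Equiv.Perm (Fin 5)) :
    w a σ * w b 1 = w (a + dperm σ b) σ := by
  unfold w; ext <;> rfl

def b1 : Dcar := ⟨![0,1,0,1,0], by rw [mem_Dcar]; decide⟩
def b2 : Dcar := ⟨![0,0,1,0,1], by rw [mem_Dcar]; decide⟩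
def b3 : Dcar := ⟨![1,0,0,1,0], by rw [mem_Dcar]; decide⟩

lemma conj_w (b a d : Dcar) (h : b + a = d + dperm σ123 b) :
    w b 1 * w a σ123 * (w b 1)⁻¹ = w d σ123 := by
  rw [w_mul_left, h, ← w_mul_right, mul_inv_cancel_right]

lemma hc1 : w b1 1 * w (c 3 + c 4) σ123 * (w b1 1)⁻¹ = w (c 0) σ123 :=
  conj_w _ _ _ (by ext j; fin_cases j <;> simp [b1, c, dperm, σ123] <;> decide)

lemma hc2 : w b2 1 * w (c 3 + c 4) σ123 * (w b2 1)⁻¹ = w (c 1) σ123 :=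
  conj_w _ _ _ (by ext j; fin_cases j <;> simp [b2, c, dperm, σ123] <;> decide)

lemma hc3 : w b3 1 * w (c 3 + c 4) σ123 * (w b3 1)⁻¹ = w (c 2) σ123 :=
  conj_w _ _ _ (by ext j; fin_cases j <;> simp [b3, c, dperm, σ123] <;> decide)

lemma pair {x y z gy gz : W} (hy : gy * x * gy⁻¹ = y) (hz : gz * x * gz⁻¹ = z) :
    ∃ g : W, Subgroup.map (MulAut.conj g).toMonoidHom (Subgroup.zpowers y) = Subgroup.zpowers z := by
  refine ⟨gz * gy⁻¹, ?_⟩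
  rw [MonoidHom.map_zpowers]
  congr 1
  rw [← hy, ← hz]
  simp [MulAut.conj_apply, mul_assoc]

/-- For `σ = (123)`, the four cyclic subgroups of `W`
generated by `(c₄ + c₅, σ)`, `(c₁, σ)`, `(c₂, σ)`, `(c₃, σ)` are pairwise
conjugate in `W`. -/
theorem four_cyclic_subgroups_conjugate :
    ∀ H₁ ∈ ({Subgroup.zpowers (w (c 3 + c 4) σ123),
          Subgroup.zpowers (w (c 0) σ123),
          Subgroup.zpowers (w (c 1) σ123),
          Subgroup.zpowers (w (c 2) σ123)} : Set (Subgroup W)),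
      ∀ H₂ ∈ ({Subgroup.zpowers (w (c 3 + c 4) σ123),
          Subgroup.zpowers (w (c 0) σ123),
          Subgroup.zpowers (w (c 1) σ123),
          Subgroup.zpowers (w (c 2) σ123)} : Set (Subgroup W)),
        ∃ g : W, Subgroup.map (MulAut.conj g).toMonoidHom H₁ = H₂ := by
  have h0 : (1 : W) * w (c 3 + c 4) σ123 * (1 : W)⁻¹ = w (c 3 + c 4) σ123 := by group
  intro H₁ h₁ H₂ h₂
  simp only [Set.mem_insert_iff, Set.mem_singleton_iff] at h₁ h₂
  rcases h₁ with rfl | rfl | rfl | rfl <;> rcases h₂ with rfl | rfl | rfl | rfl <;>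
    first
      | exact pair h0 h0 | exact pair h0 hc1 | exact pair h0 hc2 | exact pair h0 hc3
      | exact pair hc1 h0 | exact pair hc1 hc1 | exact pair hc1 hc2 | exact pair hc1 hc3
      | exact pair hc2 h0 | exact pair hc2 hc1 | exact pair hc2 hc2 | exact pair hc2 hc3
      | exact pair hc3 h0 | exact pair hc3 hc1 | exact pair hc3 hc2 | exact pair hc3 hc3
end

section
/- Let G be the subgroup of W generated by (c₄ + c₅, id), (0, (123)), and (c₄, (12)(45)) (the group denoted C₂·S₃ in the paper). Then the centralizer of G in W is exactly the cyclic subgroup of order 4 generated by (c₄, (45)); explicitly, it equals {(0, id), (c₄, (45)), (c₄ + c₅, id), (c₅, (45))}. -/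
/-- The permutation `(12)(45)` (on coordinates labelled `1,…,5`). -/
def τ1245 : Equiv.Perm (Fin 5) := Equiv.swap 0 1 * Equiv.swap 3 4

/-- The transposition `(45)` (on coordinates labelled `1,…,5`). -/
def τ45 : Equiv.Perm (Fin 5) := Equiv.swap 3 4


instance : DecidablePred (· ∈ Dcar) := fun a => decidable_of_iff (a 0 + a 1 + a 2 + a 3 + a 4 = 0) Iff.rfl
instance : Fintype Dcar := Subtype.fintype _
instance : DecidableEq W := fun x y => decidable_of_iff (x.left = y.left ∧ x.right = y.right)
  ⟨fun ⟨h1, h2⟩ => SemidirectProduct.ext h1 h2, fun h => by subst h; exact ⟨rfl, rfl⟩⟩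

set_option maxRecDepth 10000 in
theorem key : ∀ (σ : Equiv.Perm (Fin 5)) (a : Dcar),
    (w (c 3 + c 4) 1 * w a σ = w a σ * w (c 3 + c 4) 1 ∧ w 0 σ123 * w a σ = w a σ * w 0 σ123 ∧
    w (c 3) τ1245 * w a σ = w a σ * w (c 3) τ1245) ↔
    (w a σ = w 0 1 ∨ w a σ = w (c 3) τ45 ∨ w a σ = w (c 3 + c 4) 1 ∨ w a σ = w (c 4) τ45) := by
  decide

theorem key' (x : W) :
    (w (c 3 + c 4) 1 * x = x * w (c 3 + c 4) 1 ∧ w 0 σ123 * x = x * w 0 σ123 ∧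
    w (c 3) τ1245 * x = x * w (c 3) τ1245) ↔
    (x = w 0 1 ∨ x = w (c 3) τ45 ∨ x = w (c 3 + c 4) 1 ∨ x = w (c 4) τ45) :=
  key x.right (Multiplicative.toAdd x.left)

theorem mem_cent_iff (x : W) :
    x ∈ Subgroup.centralizer
      ((Subgroup.closure ({w (c 3 + c 4) 1, w 0 σ123, w (c 3) τ1245} : Set W) : Subgroup W) : Set W) ↔
    (x = w 0 1 ∨ x = w (c 3) τ45 ∨ x = w (c 3 + c 4) 1 ∨ x = w (c 4) τ45) := by
  rw [Subgroup.mem_centralizer_iff]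
  constructor
  · intro h
    refine (key' x).mp ⟨?_, ?_, ?_⟩ <;>
      exact h _ (Subgroup.subset_closure (by simp))
  · intro hx g hg
    have hc := (key' x).mpr hx
    induction hg using Subgroup.closure_induction with
    | mem g hg =>
      simp only [Set.mem_insert_iff, Set.mem_singleton_iff] at hg
      rcases hg with rfl | rfl | rfl
      · exact hc.1
      · exact hc.2.1
      · exact hc.2.2
    | one => simp
    | mul g₁ g₂ _ _ h1 h2 =>
      rw [mul_assoc, h2, ← mul_assoc, h1, mul_assoc]
    | inv g _ h =>
      have : Commute g x := h
      exact this.inv_left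

theorem pow2 : (w (c 3) τ45) ^ 2 = w (c 3 + c 4) 1 := by decide
theorem pow3 : (w (c 3) τ45) ^ 3 = w (c 4) τ45 := by decide
/-- Let `G = ⟨(c₄+c₅, id), (0, (123)), (c₄, (12)(45))⟩ ≤ W`
(the group `C₂·S₃`).  Then the centralizer of `G` in `W` is the cyclic group of
order 4 generated by `(c₄, (45))`; explicitly it is
`{(0, id), (c₄, (45)), (c₄+c₅, id), (c₅, (45))}`. -/
theorem centralizer_of_C2S3 :
    Subgroup.centralizer
        ((Subgroup.closure ({w (c 3 + c 4) 1, w 0 σ123, w (c 3) τ1245} : Set W) : Subgroup W) : Set W) =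
      Subgroup.zpowers (w (c 3) τ45) ∧
    ((Subgroup.centralizer
        ((Subgroup.closure ({w (c 3 + c 4) 1, w 0 σ123, w (c 3) τ1245} : Set W) : Subgroup W) : Set W) : Set W) =
      {w 0 1, w (c 3) τ45, w (c 3 + c 4) 1, w (c 4) τ45}) := by
  constructor
  · ext x
    rw [mem_cent_iff]
    constructor
    · rintro (rfl | rfl | rfl | rfl)
      · exact one_mem _
      · exact Subgroup.mem_zpowers _
      · rw [← pow2]; exact pow_mem (Subgroup.mem_zpowers _) 2
      · rw [← pow3]; exact pow_mem (Subgroup.mem_zpowers _) 3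
    · intro hx
      have hg : w (c 3) τ45 ∈ Subgroup.centralizer
          ((Subgroup.closure ({w (c 3 + c 4) 1, w 0 σ123, w (c 3) τ1245} : Set W) : Subgroup W) : Set W) := by
        rw [mem_cent_iff]; tauto
      exact (mem_cent_iff x).mp (Subgroup.zpowers_le.mpr hg hx)
  · ext x
    rw [SetLike.mem_coe, mem_cent_iff]
    simp [Set.mem_insert_iff]
end

section
/- Consider the subgroups of W: I₁ := ⟨(c₁ + c₅, id), (c₁, (23)), (0, (234))⟩, I₂ := ⟨(c₁, (15)(23)), (0, (234))⟩, and I₃ := ⟨(c₁, (23)), (0, (15)), (0, (234))⟩. For each J ∈ {I₁, I₂, I₃}, the centralizer of J in W is contained in the subgroup {(a, id) | a ∈ ⟨c₁, c₅⟩} or is contained in the cyclic subgroup generated by (c₅, (15)). -/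
/-- The 3-cycle `(234)` (on coordinates labelled `1,…,5`). -/
def σ234 : Equiv.Perm (Fin 5) := Equiv.swap 1 2 * Equiv.swap 2 3

/-- The subgroup `I₁ = ⟨(c₁+c₅, id), (c₁, (23)), (0, (234))⟩` of `W`. -/
def I₁ : Subgroup W :=
  Subgroup.closure {w (c 0 + c 4) 1, w (c 0) (Equiv.swap 1 2), w 0 σ234}

/-- The subgroup `I₂ = ⟨(c₁, (15)(23)), (0, (234))⟩` of `W`. -/
def I₂ : Subgroup W :=
  Subgroup.closure {w (c 0) (Equiv.swap 0 4 * Equiv.swap 1 2), w 0 σ234}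

/-- The subgroup `I₃ = ⟨(c₁, (23)), (0, (15)), (0, (234))⟩` of `W`. -/
def I₃ : Subgroup W :=
  Subgroup.closure {w (c 0) (Equiv.swap 1 2), w 0 (Equiv.swap 0 4), w 0 σ234}


section Aux

/-- Underlying function of `c i`. -/
def cv (i : Fin 5) : Fin 5 → ZMod 2 := fun j => if j = i then 0 else 1

instance inst_s8 : DecidableEq W := fun g h =>
  decidable_of_iff (g.left = h.left ∧ g.right = h.right)
    (by cases g; cases h; simp [SemidirectProduct.ext_iff])

def τ₂ : Equiv.Perm (Fin 5) := Equiv.swap 0 4 * Equiv.swap 1 2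

set_option synthInstance.maxSize 4000 in
set_option synthInstance.maxHeartbeats 2000000 in
set_option maxRecDepth 40000 in
set_option maxHeartbeats 4000000 in
lemma key1 : ∀ (v : Fin 5 → ZMod 2) (σ : Equiv.Perm (Fin 5)),
    v 0 + v 1 + v 2 + v 3 + v 4 = 0 →
    ((cv 0 + cv 4) + v ∘ ⇑(1 : Equiv.Perm (Fin 5)).symm = v + (cv 0 + cv 4) ∘ ⇑σ.symm ∧
      (1 : Equiv.Perm (Fin 5)) * σ = σ * 1) →
    (cv 0 + v ∘ ⇑(Equiv.swap 1 2).symm = v + cv 0 ∘ ⇑σ.symm ∧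
      (Equiv.swap 1 2) * σ = σ * (Equiv.swap 1 2)) →
    ((0 : Fin 5 → ZMod 2) + v ∘ ⇑σ234.symm = v + (0 : Fin 5 → ZMod 2) ∘ ⇑σ.symm ∧
      σ234 * σ = σ * σ234) →
    σ = 1 ∧ (v = 0 ∨ v = cv 0 ∨ v = cv 4 ∨ v = cv 0 + cv 4) := by decide

set_option synthInstance.maxSize 4000 in
set_option synthInstance.maxHeartbeats 2000000 in
set_option maxRecDepth 40000 in
set_option maxHeartbeats 4000000 in
lemma key2 : ∀ (v : Fin 5 → ZMod 2) (σ : Equiv.Perm (Fin 5)),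
    v 0 + v 1 + v 2 + v 3 + v 4 = 0 →
    (cv 0 + v ∘ ⇑τ₂.symm = v + cv 0 ∘ ⇑σ.symm ∧ τ₂ * σ = σ * τ₂) →
    ((0 : Fin 5 → ZMod 2) + v ∘ ⇑σ234.symm = v + (0 : Fin 5 → ZMod 2) ∘ ⇑σ.symm ∧
      σ234 * σ = σ * σ234) →
    ((σ = 1 ∧ (v = 0 ∨ v = cv 0 + cv 4)) ∨
      (σ = Equiv.swap 0 4 ∧ (v = cv 0 ∨ v = cv 4))) := by decide

set_option synthInstance.maxSize 4000 in
set_option synthInstance.maxHeartbeats 2000000 in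
set_option maxRecDepth 40000 in
set_option maxHeartbeats 4000000 in
lemma key3 : ∀ (v : Fin 5 → ZMod 2) (σ : Equiv.Perm (Fin 5)),
    v 0 + v 1 + v 2 + v 3 + v 4 = 0 →
    (cv 0 + v ∘ ⇑(Equiv.swap 1 2).symm = v + cv 0 ∘ ⇑σ.symm ∧
      (Equiv.swap 1 2) * σ = σ * (Equiv.swap 1 2)) →
    ((0 : Fin 5 → ZMod 2) + v ∘ ⇑(Equiv.swap 0 4).symm = v + (0 : Fin 5 → ZMod 2) ∘ ⇑σ.symm ∧
      (Equiv.swap 0 4) * σ = σ * (Equiv.swap 0 4)) →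
    ((0 : Fin 5 → ZMod 2) + v ∘ ⇑σ234.symm = v + (0 : Fin 5 → ZMod 2) ∘ ⇑σ.symm ∧
      σ234 * σ = σ * σ234) →
    σ = 1 ∧ (v = 0 ∨ v = cv 0 + cv 4) := by decide

/-- Coordinate function of the `D`-part of an element of `W`. -/
def Fv (z : W) : Fin 5 → ZMod 2 := ((Multiplicative.toAdd z.left : Dcar) : Fin 5 → ZMod 2)

end Aux

set_option maxRecDepth 10000 in
/-- For each `J ∈ {I₁, I₂, I₃}`, the centralizer of `J` in `W`
is contained in `{(a, id) | a ∈ ⟨c₁, c₅⟩}` or in the cyclic subgroup generated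
by `(c₅, (15))`. -/
theorem centralizer_of_splitting_groups :
    ∀ J ∈ ({I₁, I₂, I₃} : Set (Subgroup W)),
      ((Subgroup.centralizer (J : Set W) : Set W) ⊆
          {g : W | ∃ a ∈ AddSubgroup.closure ({c 0, c 4} : Set Dcar), g = w a 1}) ∨
        Subgroup.centralizer (J : Set W) ≤
          Subgroup.zpowers (w (c 4) (Equiv.swap 0 4)) := by
  have hc0 : c 0 ∈ AddSubgroup.closure ({c 0, c 4} : Set Dcar) :=
    AddSubgroup.subset_closure (Set.mem_insert _ _)
  have hc4 : c 4 ∈ AddSubgroup.closure ({c 0, c 4} : Set Dcar) :=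
    AddSubgroup.subset_closure (Set.mem_insert_of_mem _ rfl)
  intro J hJ
  simp only [Set.mem_insert_iff, Set.mem_singleton_iff] at hJ
  rcases hJ with rfl | rfl | rfl
  · -- I₁
    left
    rintro ⟨a, σ⟩ hg
    have H := Subgroup.mem_centralizer_iff.mp hg
    have e1 := H _ (Subgroup.subset_closure (Set.mem_insert _ _))
    have e2 := H _ (Subgroup.subset_closure (Set.mem_insert_of_mem _ (Set.mem_insert _ _)))
    have e3 := H _ (Subgroup.subset_closure (Set.mem_insert_of_mem _ (Set.mem_insert_of_mem _ rfl)))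
    obtain ⟨hσ, hv⟩ := key1 ((Multiplicative.toAdd a : Dcar) : Fin 5 → ZMod 2) σ
      (Multiplicative.toAdd a).2
      ⟨congrArg Fv e1, congrArg SemidirectProduct.right e1⟩
      ⟨congrArg Fv e2, congrArg SemidirectProduct.right e2⟩
      ⟨congrArg Fv e3, congrArg SemidirectProduct.right e3⟩
    cases hσ
    refine ⟨Multiplicative.toAdd a, ?_, rfl⟩
    rcases hv with h | h | h | h
    · rw [show Multiplicative.toAdd a = (0 : Dcar) from Subtype.ext h]; exact zero_mem _
    · rw [show Multiplicative.toAdd a = c 0 from Subtype.ext h]; exact hc0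
    · rw [show Multiplicative.toAdd a = c 4 from Subtype.ext h]; exact hc4
    · rw [show Multiplicative.toAdd a = c 0 + c 4 from Subtype.ext h]; exact add_mem hc0 hc4
  · -- I₂
    right
    rintro ⟨a, σ⟩ hg
    have H := Subgroup.mem_centralizer_iff.mp hg
    have e1 := H _ (Subgroup.subset_closure (Set.mem_insert _ _))
    have e2 := H _ (Subgroup.subset_closure (Set.mem_insert_of_mem _ rfl))
    rw [Subgroup.mem_zpowers_iff]
    rcases key2 ((Multiplicative.toAdd a : Dcar) : Fin 5 → ZMod 2) σ
      (Multiplicative.toAdd a).2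
      ⟨congrArg Fv e1, congrArg SemidirectProduct.right e1⟩
      ⟨congrArg Fv e2, congrArg SemidirectProduct.right e2⟩ with ⟨hσ, hv⟩ | ⟨hσ, hv⟩ <;>
      cases hσ
    · rcases hv with h | h
      · exact ⟨0, by rw [show a = Multiplicative.ofAdd (0 : Dcar) from Subtype.ext h]; decide⟩
      · exact ⟨2, by rw [show a = Multiplicative.ofAdd (c 0 + c 4) from Subtype.ext h]; decide⟩
    · rcases hv with h | h
      · exact ⟨3, by rw [show a = Multiplicative.ofAdd (c 0) from Subtype.ext h]; decide⟩
      · exact ⟨1, by rw [show a = Multiplicative.ofAdd (c 4) from Subtype.ext h]; decide⟩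
  · -- I₃
    left
    rintro ⟨a, σ⟩ hg
    have H := Subgroup.mem_centralizer_iff.mp hg
    have e1 := H _ (Subgroup.subset_closure (Set.mem_insert _ _))
    have e2 := H _ (Subgroup.subset_closure (Set.mem_insert_of_mem _ (Set.mem_insert _ _)))
    have e3 := H _ (Subgroup.subset_closure (Set.mem_insert_of_mem _ (Set.mem_insert_of_mem _ rfl)))
    obtain ⟨hσ, hv⟩ := key3 ((Multiplicative.toAdd a : Dcar) : Fin 5 → ZMod 2) σ
      (Multiplicative.toAdd a).2
      ⟨congrArg Fv e1, congrArg SemidirectProduct.right e1⟩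
      ⟨congrArg Fv e2, congrArg SemidirectProduct.right e2⟩
      ⟨congrArg Fv e3, congrArg SemidirectProduct.right e3⟩
    cases hσ
    refine ⟨Multiplicative.toAdd a, ?_, rfl⟩
    rcases hv with h | h
    · rw [show Multiplicative.toAdd a = (0 : Dcar) from Subtype.ext h]; exact zero_mem _
    · rw [show Multiplicative.toAdd a = c 0 + c 4 from Subtype.ext h]; exact add_mem hc0 hc4
end

section
/- Let M be the 6×6 integer matrix M = [[-1,0,0,0,-1,-1],[0,-1,0,0,-1,-1],[0,0,-1,0,-1,-1],[-1,-1,-1,-1,-1,-2],[0,0,0,-1,-1,-1],[1,1,1,1,2,3]] acting on ℤ⁶ by matrix-vector multiplication. Then the submodule of fixed vectors {v ∈ ℤ⁶ | M·v = v} is isomorphic to ℤ as a ℤ-module (it is free of rank 1; in fact it is generated by the vector (1,1,1,1,1,−3)). -/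
/-- The matrix of the action of `c₄(45) ∈ W(D₅)` on the Picard lattice of a
quartic del Pezzo surface, with respect to the basis `(E₁,…,E₅,H)`. -/
def M : Matrix (Fin 6) (Fin 6) ℤ :=
  !![-1, 0, 0, 0, -1, -1;
     0, -1, 0, 0, -1, -1;
     0, 0, -1, 0, -1, -1;
     -1, -1, -1, -1, -1, -2;
     0, 0, 0, -1, -1, -1;
     1, 1, 1, 1, 2, 3]

private lemma val0 {α} (a b c d e f : α) : (![a,b,c,d,e,f]) 0 = a := rfl
private lemma val1 {α} (a b c d e f : α) : (![a,b,c,d,e,f]) 1 = b := rfl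
private lemma val2 {α} (a b c d e f : α) : (![a,b,c,d,e,f]) 2 = c := rfl
private lemma val3 {α} (a b c d e f : α) : (![a,b,c,d,e,f]) 3 = d := rfl
private lemma val4 {α} (a b c d e f : α) : (![a,b,c,d,e,f]) 4 = e := rfl
private lemma val5 {α} (a b c d e f : α) : (![a,b,c,d,e,f]) 5 = f := rfl

lemma ker_eq_span :
    (LinearMap.ker (M.mulVecLin - LinearMap.id) : Submodule ℤ (Fin 6 → ℤ)) =
      Submodule.span ℤ {![1, 1, 1, 1, 1, -3]} := by
  apply le_antisymm
  · intro v hv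
    simp only [LinearMap.mem_ker, LinearMap.sub_apply, Matrix.mulVecLin_apply,
      LinearMap.id_apply, sub_eq_zero] at hv
    have h0 := congrFun hv 0
    have h1 := congrFun hv 1
    have h2 := congrFun hv 2
    have h3 := congrFun hv 3
    have h4 := congrFun hv 4
    have h5 := congrFun hv 5
    simp [M, Matrix.mulVec, dotProduct, Fin.sum_univ_six, val0, val1, val2, val3, val4, val5] at h0 h1 h2 h3 h4 h5
    have : v = (v 3) • ![1, 1, 1, 1, 1, -3] := by
      funext i
      fin_cases i <;> simp [val0, val1, val2, val3, val4, val5] <;> omega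
    rw [this]
    exact Submodule.smul_mem _ _ (Submodule.mem_span_singleton_self _)
  · rw [Submodule.span_le, Set.singleton_subset_iff]
    simp only [SetLike.mem_coe, LinearMap.mem_ker, LinearMap.sub_apply,
      Matrix.mulVecLin_apply, LinearMap.id_apply, sub_eq_zero]
    decide

/-- The submodule of vectors of `ℤ⁶` fixed by `M` is free of
rank one: it is isomorphic to `ℤ` as a `ℤ`-module, and is generated by the
vector `(1,1,1,1,1,-3)`. -/
theorem fixed_submodule_isomorphic_to_int :
    Nonempty
      ((LinearMap.ker (M.mulVecLin - LinearMap.id) : Submodule ℤ (Fin 6 → ℤ)) ≃ₗ[ℤ] ℤ) ∧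
    (LinearMap.ker (M.mulVecLin - LinearMap.id) : Submodule ℤ (Fin 6 → ℤ)) =
      Submodule.span ℤ {![1, 1, 1, 1, 1, -3]} := by
  refine ⟨?_, ker_eq_span⟩
  rw [ker_eq_span]
  have hne : (![1, 1, 1, 1, 1, -3] : Fin 6 → ℤ) ≠ 0 := by
    intro h
    have := congrFun h 0
    simp at this
  exact ⟨(LinearEquiv.toSpanNonzeroSingleton ℤ (Fin 6 → ℤ) _ hne).symm⟩
end

section
/- Let k be a field of characteristic zero, let PGL₂(k) denote the quotient of the group GL₂(k) of invertible 2×2 matrices over k by its center, and let n be a positive integer. The following are equivalent: (a) PGL₂(k) contains an element of order n; (b) PGL₂(k) contains a subgroup isomorphic to the dihedral group of order 2n; (c) there exists a primitive n-th root of unity ζ in an algebraic closure of k such that ζ + ζ⁻¹ lies in (the image of) k. -/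
open Matrix Polynomial

/-- `PGL₂(k)`: the quotient of `GL₂(k)` by its center. -/
abbrev PGL2 (k : Type*) [Field k] :=
  Matrix.GeneralLinearGroup (Fin 2) k ⧸
    Subgroup.center (Matrix.GeneralLinearGroup (Fin 2) k)

section Aux

variable {k : Type*} [Field k]

theorem aux_mem_center_GL2_iff (M : GL (Fin 2) k) :
    M ∈ Subgroup.center (GL (Fin 2) k) ↔ ∃ c : k, (M : Matrix (Fin 2) (Fin 2) k) = c • 1 := by
  rw [Subgroup.mem_center_iff]
  constructor
  · intro h
    have h2 : ∀ t : TransvectionStruct (Fin 2) k,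
        Commute t.toMatrix (M : Matrix (Fin 2) (Fin 2) k) := by
      intro t
      have := h ⟨t.toMatrix, t.inv.toMatrix, t.mul_inv, t.inv_mul⟩
      have h3 := congrArg (Units.val) this
      simpa [Units.val_mul, Commute, SemiconjBy] using h3
    obtain ⟨c, hc⟩ := Matrix.mem_range_scalar_of_commute_transvectionStruct h2
    exact ⟨c, by rw [← hc]; ext i j; simp [Matrix.scalar_apply, Matrix.smul_apply,
      Matrix.one_apply, Matrix.diagonal_apply, mul_ite, mul_one, mul_zero]⟩
  · rintro ⟨c, hc⟩ N
    ext
    show ((N * M : GL (Fin 2) k) : Matrix (Fin 2) (Fin 2) k) _ _ =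
      ((M * N : GL (Fin 2) k) : Matrix (Fin 2) (Fin 2) k) _ _
    rw [Units.val_mul, Units.val_mul, hc]
    simp [Matrix.mul_smul, Matrix.smul_mul]

theorem aux_pow_mk_eq_one_iff (M : GL (Fin 2) k) (m : ℕ) :
    ((QuotientGroup.mk M : PGL2 k) ^ m = 1) ↔
      ∃ c : k, ((M : Matrix (Fin 2) (Fin 2) k)) ^ m = c • 1 := by
  have : (QuotientGroup.mk M : PGL2 k) ^ m = QuotientGroup.mk (M ^ m) := by
    rw [← QuotientGroup.mk_pow]
  rw [this, QuotientGroup.eq_one_iff, aux_mem_center_GL2_iff]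
  simp [Units.val_pow_eq_pow_val]

theorem aux_mk_eq_one_iff (M : GL (Fin 2) k) :
    ((QuotientGroup.mk M : PGL2 k) = 1) ↔
      ∃ c : k, ((M : Matrix (Fin 2) (Fin 2) k)) = c • 1 := by
  rw [QuotientGroup.eq_one_iff, aux_mem_center_GL2_iff]

theorem aux_scalar_map_iff {K : Type*} [Field K] (f : k →+* K) (A : Matrix (Fin 2) (Fin 2) k) :
    (∃ c : K, A.map f = c • 1) ↔ ∃ c : k, A = c • 1 := by
  constructor
  · rintro ⟨c, hc⟩
    refine ⟨A 0 0, ?_⟩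
    have h00 : f (A 0 0) = c := by
      have := congrFun (congrFun hc 0) 0
      simpa [Matrix.map_apply] using this
    ext i j
    apply f.injective
    have := congrFun (congrFun hc i) j
    rw [Matrix.map_apply] at this
    rw [this, Matrix.smul_apply, Matrix.smul_apply, Matrix.one_apply, Matrix.one_apply]
    by_cases hij : i = j <;> simp [hij, h00]
  · rintro ⟨c, rfl⟩
    refine ⟨f c, ?_⟩
    ext i j
    rw [Matrix.map_apply, Matrix.smul_apply, Matrix.smul_apply, Matrix.one_apply,
      Matrix.one_apply]
    by_cases hij : i = j <;> simp [hij]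

theorem aux_charpoly_fin_two (M : Matrix (Fin 2) (Fin 2) k) :
    M.charpoly = X ^ 2 - C (M.trace) * X + C (M.det) := by
  rw [Matrix.charpoly, Matrix.det_fin_two, Matrix.trace_fin_two, Matrix.det_fin_two]
  simp only [charmatrix_apply_eq, charmatrix_apply_ne _ _ _ (by decide : (0:Fin 2) ≠ 1),
    charmatrix_apply_ne _ _ _ (by decide : (1:Fin 2) ≠ 0)]
  simp only [C_add, C_sub, C_mul]
  ring

theorem aux_natDegree_modByMonic_le_one (A : Matrix (Fin 2) (Fin 2) k) (m : ℕ) :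
    ((X : k[X]) ^ m %ₘ A.charpoly).natDegree ≤ 1 := by
  have hmonic := A.charpoly_monic
  have h1 : A.charpoly ≠ 1 := by
    intro h
    have := A.charpoly_natDegree_eq_dim
    rw [h] at this
    simp at this
  have := natDegree_modByMonic_lt (X ^ m : k[X]) hmonic h1
  rw [A.charpoly_natDegree_eq_dim] at this
  simp only [Fintype.card_fin] at this
  omega

theorem aux_pow_eq_smul_add (A : Matrix (Fin 2) (Fin 2) k) (m : ℕ) :
    A ^ m = ((X ^ m %ₘ A.charpoly).coeff 1) • A +
      ((X ^ m %ₘ A.charpoly).coeff 0) • (1 : Matrix (Fin 2) (Fin 2) k) := by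
  have hmonic := A.charpoly_monic
  have hdeg := aux_natDegree_modByMonic_le_one A m
  have key : aeval A ((X : k[X]) ^ m) = aeval A (X ^ m %ₘ A.charpoly) := by
    conv_lhs => rw [← modByMonic_add_div ((X : k[X]) ^ m) A.charpoly]
    rw [map_add, _root_.map_mul, aeval_self_charpoly, zero_mul, add_zero]
  have : A ^ m = aeval A (X ^ m %ₘ A.charpoly) := by simpa using key
  rw [this]
  conv_lhs => rw [eq_X_add_C_of_natDegree_le_one hdeg]
  simp only [map_add, _root_.map_mul, aeval_C, aeval_X, ← Algebra.smul_def,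
    Algebra.algebraMap_eq_smul_one, smul_mul_assoc, one_mul]

theorem aux_root_pow_eq {A : Matrix (Fin 2) (Fin 2) k} {γ : k} (hγ : A.charpoly.eval γ = 0)
    (m : ℕ) :
    γ ^ m = ((X ^ m %ₘ A.charpoly).coeff 1) * γ + ((X ^ m %ₘ A.charpoly).coeff 0) := by
  have hmonic := A.charpoly_monic
  have hdeg := aux_natDegree_modByMonic_le_one A m
  have : ((X : k[X]) ^ m).eval γ = (X ^ m %ₘ A.charpoly).eval γ := by
    conv_lhs => rw [← modByMonic_add_div ((X : k[X]) ^ m) A.charpoly]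
    rw [eval_add, eval_mul, hγ, zero_mul, add_zero]
  rw [eval_pow, eval_X] at this
  rw [this]
  conv_lhs => rw [eq_X_add_C_of_natDegree_le_one hdeg]
  simp

theorem aux_pow_scalar_iff {A : Matrix (Fin 2) (Fin 2) k} (hA : ∀ c : k, A ≠ c • 1)
    {α β : k} (hfac : A.charpoly = (X - C α) * (X - C β)) (hne : α ≠ β) (m : ℕ) :
    (∃ c : k, A ^ m = c • (1 : Matrix (Fin 2) (Fin 2) k)) ↔ α ^ m = β ^ m := by
  set u := (X ^ m %ₘ A.charpoly).coeff 1 with hu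
  set v := (X ^ m %ₘ A.charpoly).coeff 0 with hv
  have hpow := aux_pow_eq_smul_add A m
  rw [← hu, ← hv] at hpow
  have hα : α ^ m = u * α + v := aux_root_pow_eq (by rw [hfac]; simp) m
  have hβ : β ^ m = u * β + v := aux_root_pow_eq (by rw [hfac]; simp) m
  constructor
  · rintro ⟨c, hc⟩
    have hu0 : u = 0 := by
      by_contra h0
      apply hA (u⁻¹ * (c - v))
      have : u • A = (c - v) • (1 : Matrix (Fin 2) (Fin 2) k) := by
        rw [hpow] at hc
        rw [sub_smul, ← hc]
        abel
      calc A = u⁻¹ • (u • A) := by rw [smul_smul, inv_mul_cancel₀ h0, one_smul]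
      _ = (u⁻¹ * (c - v)) • 1 := by rw [this, smul_smul]
    rw [hα, hβ, hu0]
    ring
  · intro h
    have hu0 : u = 0 := by
      have : u * (α - β) = 0 := by
        have := hα.symm.trans (h.trans hβ)
        linear_combination this
      rcases mul_eq_zero.mp this with h' | h'
      · exact h'
      · exact absurd (sub_eq_zero.mp h') hne
    exact ⟨v, by rw [hpow, hu0, zero_smul, zero_add]⟩

theorem aux_repeated_root_not_scalar [CharZero k] {A : Matrix (Fin 2) (Fin 2) k}
    (hA : ∀ c : k, A ≠ c • 1) {α : k} (hα : α ≠ 0)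
    (hfac : A.charpoly = (X - C α) * (X - C α)) {m : ℕ} (hm : m ≠ 0) {c : k}
    (hc : A ^ m = c • (1 : Matrix (Fin 2) (Fin 2) k)) : False := by
  set u := (X ^ m %ₘ A.charpoly).coeff 1 with hu
  set v := (X ^ m %ₘ A.charpoly).coeff 0 with hv
  have hpow := aux_pow_eq_smul_add A m
  rw [← hu, ← hv] at hpow
  have hu0 : u = 0 := by
    by_contra h0
    apply hA (u⁻¹ * (c - v))
    have : u • A = (c - v) • (1 : Matrix (Fin 2) (Fin 2) k) := by
      rw [hpow] at hc
      rw [sub_smul, ← hc]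
      abel
    calc A = u⁻¹ • (u • A) := by rw [smul_smul, inv_mul_cancel₀ h0, one_smul]
    _ = (u⁻¹ * (c - v)) • 1 := by rw [this, smul_smul]
  have hmonic := A.charpoly_monic
  have hdeg := aux_natDegree_modByMonic_le_one A m
  have hmod : (X ^ m %ₘ A.charpoly) = C v := by
    conv_lhs => rw [eq_X_add_C_of_natDegree_le_one hdeg]
    rw [← hu, ← hv, hu0, map_zero, zero_mul, zero_add]
  have hdvd : (X : k[X]) ^ m = A.charpoly * (X ^ m /ₘ A.charpoly) + C v := by
    conv_lhs => rw [← modByMonic_add_div ((X : k[X]) ^ m) A.charpoly]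
    rw [hmod]
    ring
  have hder := congrArg derivative hdvd
  rw [derivative_X_pow, derivative_add, derivative_mul, derivative_C, add_zero, hfac] at hder
  have := congrArg (eval α) hder
  simp only [eval_mul, eval_add, eval_sub, eval_X, eval_C, sub_self, zero_mul, mul_zero,
    derivative_mul, derivative_sub, derivative_X, derivative_C, eval_natCast, eval_pow] at this
  have hzero : (m : k) * α ^ (m - 1) = 0 := by
    rw [this]
    ring
  rcases mul_eq_zero.mp hzero with h' | h'
  · exact hm (Nat.cast_eq_zero.mp h')
  · exact pow_ne_zero _ hα h'

theorem aux_charpoly_factor {K : Type*} [Field K] [IsAlgClosed K]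
    (A : Matrix (Fin 2) (Fin 2) K) :
    ∃ α β : K, A.charpoly = (X - C α) * (X - C β) ∧ α * β = A.det ∧ α + β = A.trace := by
  have hmonic := A.charpoly_monic
  have hsplits : Splits A.charpoly := IsAlgClosed.splits _
  have hcard : Multiset.card A.charpoly.roots = 2 := by
    rw [splits_iff_card_roots.mp hsplits, A.charpoly_natDegree_eq_dim, Fintype.card_fin]
  obtain ⟨α, β, hroots⟩ := Multiset.card_eq_two.mp hcard
  have hfac : A.charpoly = (X - C α) * (X - C β) := by
    have := hsplits.eq_prod_roots_of_monic hmonic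
    rw [hroots] at this
    simpa [Multiset.map_cons, Multiset.prod_cons] using this
  refine ⟨α, β, hfac, ?_, ?_⟩
  · have h0 := congrArg (eval 0) (hfac.symm.trans (aux_charpoly_fin_two A))
    simp at h0
    exact h0
  · have h0 := congrArg (eval 0) (hfac.symm.trans (aux_charpoly_fin_two A))
    have h1 := congrArg (eval 1) (hfac.symm.trans (aux_charpoly_fin_two A))
    simp at h0 h1
    linear_combination h0 - h1

open DihedralGroup in
theorem aux_exists_dihedral {G : Type*} [Group G] {n : ℕ} (hn : 0 < n) {a b : G}
    (ha : orderOf a = n) (hb2 : b * b = 1) (hconj : b * a * b⁻¹ = a⁻¹)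
    (hnot : ∀ m : ℕ, b ≠ a ^ m) :
    ∃ H : Subgroup G, Nonempty (H ≃* DihedralGroup n) := by
  haveI : NeZero n := ⟨hn.ne'⟩
  set χ : ZMod n → G := fun i => a ^ i.val with hχ
  have hbinv : b⁻¹ = b := by
    rw [inv_eq_iff_mul_eq_one, hb2]
  have hcast : ∀ m : ℕ, χ (m : ZMod n) = a ^ m := by
    intro m
    rw [hχ]
    simp only [ZMod.val_natCast]
    rw [← ha, pow_mod_orderOf]
  have hsurj : ∀ i : ZMod n, ∃ m : ℕ, (m : ZMod n) = i := fun i =>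
    ⟨i.val, ZMod.natCast_rightInverse i⟩
  have hadd : ∀ i j : ZMod n, χ (i + j) = χ i * χ j := by
    intro i j
    obtain ⟨x, rfl⟩ := hsurj i
    obtain ⟨y, rfl⟩ := hsurj j
    rw [← Nat.cast_add, hcast, hcast, hcast, pow_add]
  have hzero : χ 0 = 1 := by
    have := hcast 0
    simpa using this
  have hinv : ∀ i : ZMod n, χ (-i) = (χ i)⁻¹ := by
    intro i
    rw [eq_inv_iff_mul_eq_one, ← hadd, neg_add_cancel, hzero]
  have hbconj : ∀ i : ZMod n, b * χ i * b⁻¹ = (χ i)⁻¹ := by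
    intro i
    obtain ⟨x, rfl⟩ := hsurj i
    rw [hcast, ← conj_pow, hconj, inv_pow]
  have hchib : ∀ i : ZMod n, χ i * b = b * (χ i)⁻¹ := by
    intro i
    have := hbconj i
    rw [hbinv] at this
    calc χ i * b = (b * b) * χ i * b := by rw [hb2, one_mul]
    _ = b * (b * χ i * b) := by rw [mul_assoc, mul_assoc, mul_assoc]
    _ = b * (χ i)⁻¹ := by rw [this]
  let f : DihedralGroup n → G := fun x =>
    match x with
    | DihedralGroup.r i => χ i
    | DihedralGroup.sr i => b * χ i
  have hmul : ∀ x y : DihedralGroup n, f (x * y) = f x * f y := by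
    intro x y
    rcases x with i | i <;> rcases y with j | j
    · show χ (i + j) = χ i * χ j
      exact hadd i j
    · show b * χ (j - i) = χ i * (b * χ j)
      rw [← mul_assoc, hchib, sub_eq_neg_add, hadd, hinv, mul_assoc]
    · show b * χ (i + j) = b * χ i * χ j
      rw [hadd, mul_assoc]
    · show χ (j - i) = b * χ i * (b * χ j)
      rw [mul_assoc, ← mul_assoc (χ i), hchib, ← mul_assoc, ← mul_assoc, hb2,
        one_mul, sub_eq_neg_add, hadd, hinv]
  let φ : DihedralGroup n →* G := MonoidHom.mk' f hmul
  have hvalinj : ∀ i j : ZMod n, χ i = χ j → i = j := by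
    intro i j h
    have : a ^ i.val = a ^ j.val := h
    rw [pow_inj_mod, ha, Nat.mod_eq_of_lt (ZMod.val_lt i),
      Nat.mod_eq_of_lt (ZMod.val_lt j)] at this
    exact ZMod.val_injective n this
  have hbnot : ∀ i : ZMod n, b ≠ χ i := by
    intro i h
    exact hnot i.val h
  have hinj : Function.Injective φ := by
    intro x y h
    rcases x with i | i <;> rcases y with j | j
    · exact congrArg DihedralGroup.r (hvalinj i j h)
    · exfalso
      have : χ i = b * χ j := h
      have hb : b = χ i * (χ j)⁻¹ := by rw [this]; group
      rw [← hinv, ← hadd] at hb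
      exact hbnot _ hb
    · exfalso
      have : b * χ i = χ j := h
      have hb : b = χ j * (χ i)⁻¹ := by rw [← this]; group
      rw [← hinv, ← hadd] at hb
      exact hbnot _ hb
    · have : b * χ i = b * χ j := h
      exact congrArg DihedralGroup.sr (hvalinj i j (mul_left_cancel this))
  exact ⟨φ.range, ⟨(MonoidHom.ofInjective hinj).symm⟩⟩

end Aux

/-- For a field `k` of characteristic zero and `n > 0`, the
following are equivalent: (a) `PGL₂(k)` contains an element of order `n`;
(b) `PGL₂(k)` contains a subgroup isomorphic to the dihedral group of order
`2n`; (c) there is a primitive `n`-th root of unity `ζ` in the algebraic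
closure of `k` with `ζ + ζ⁻¹ ∈ k`. -/
theorem pgl2_contains_Cn_and_Dn_iff (k : Type*) [Field k] [CharZero k]
    (n : ℕ) (hn : 0 < n) :
    List.TFAE
      [∃ g : PGL2 k, orderOf g = n,
       ∃ H : Subgroup (PGL2 k), Nonempty (H ≃* DihedralGroup n),
       ∃ ζ : AlgebraicClosure k, IsPrimitiveRoot ζ n ∧
          ζ + ζ⁻¹ ∈ (algebraMap k (AlgebraicClosure k)).range] := by
  haveI : NeZero n := ⟨hn.ne'⟩
  tfae_have 2 → 1
  · rintro ⟨H, ⟨e⟩⟩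
    refine ⟨(e.symm (DihedralGroup.r 1) : H), ?_⟩
    rw [Subgroup.orderOf_coe]
    rw [show orderOf (e.symm (DihedralGroup.r 1)) =
        orderOf (e.symm.toMonoidHom (DihedralGroup.r 1)) from rfl]
    rw [orderOf_injective e.symm.toMonoidHom e.symm.injective, DihedralGroup.orderOf_r_one]
  tfae_have 1 → 3
  · rintro ⟨g, hg⟩
    set K := AlgebraicClosure k with hK
    set f := algebraMap k K with hf
    haveI : CharZero K := charZero_of_injective_algebraMap f.injective
    rcases eq_or_ne n 1 with rfl | hn1
    · exact ⟨1, IsPrimitiveRoot.one, ⟨2, by rw [map_ofNat]; norm_num⟩⟩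
    obtain ⟨M, rfl⟩ := QuotientGroup.mk_surjective g
    have hns : ∀ c : k, (M : Matrix (Fin 2) (Fin 2) k) ≠ c • 1 := by
      intro c hc
      have : (QuotientGroup.mk M : PGL2 k) = 1 := (aux_mk_eq_one_iff M).mpr ⟨c, hc⟩
      rw [this, orderOf_one] at hg
      exact hn1 hg.symm
    set A : Matrix (Fin 2) (Fin 2) K := ((M : Matrix (Fin 2) (Fin 2) k)).map f with hA
    have hAns : ∀ c : K, A ≠ c • 1 := by
      intro c hc
      obtain ⟨c', hc'⟩ := (aux_scalar_map_iff f _).mp ⟨c, hc⟩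
      exact hns c' hc'
    obtain ⟨α, β, hfac, hdet, htr⟩ := aux_charpoly_factor A
    have hdetm : A.det = f ((M : Matrix (Fin 2) (Fin 2) k).det) := by
      rw [hA, ← RingHom.mapMatrix_apply, ← RingHom.map_det]
    have htrm : A.trace = f ((M : Matrix (Fin 2) (Fin 2) k).trace) := by
      rw [hA, Matrix.trace_fin_two, Matrix.trace_fin_two, map_add]
      rfl
    have hdetk : (M : Matrix (Fin 2) (Fin 2) k).det ≠ 0 := by
      have : IsUnit (M : Matrix (Fin 2) (Fin 2) k).det :=
        (Matrix.isUnit_iff_isUnit_det _).mp M.isUnit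
      exact this.ne_zero
    have hdet0 : A.det ≠ 0 := by
      rw [hdetm]
      intro h
      exact hdetk (f.injective (by rw [h, map_zero]))
    have hα0 : α ≠ 0 := by
      intro h
      rw [h, zero_mul] at hdet
      exact hdet0 hdet.symm
    have hβ0 : β ≠ 0 := by
      intro h
      rw [h, mul_zero] at hdet
      exact hdet0 hdet.symm
    have hmp : ∀ m : ℕ, A ^ m = (((M : Matrix (Fin 2) (Fin 2) k)) ^ m).map f := by
      intro m
      rw [hA, ← RingHom.mapMatrix_apply, ← RingHom.mapMatrix_apply, map_pow]
    have hpowiff : ∀ m : ℕ, ((QuotientGroup.mk M : PGL2 k) ^ m = 1) ↔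
        ∃ c : K, A ^ m = c • 1 := by
      intro m
      rw [aux_pow_mk_eq_one_iff M m]
      constructor
      · rintro ⟨c, hc⟩
        exact (hmp m).symm ▸ ((aux_scalar_map_iff f _).mpr ⟨c, hc⟩)
      · rintro ⟨c, hc⟩
        rw [hmp m] at hc
        exact (aux_scalar_map_iff f _).mp ⟨c, hc⟩
    by_cases hαβ : α = β
    · exfalso
      subst hαβ
      obtain ⟨c, hc⟩ : ∃ c : K, A ^ n = c • 1 :=
        (hpowiff n).mp (by rw [← hg]; exact pow_orderOf_eq_one _)
      exact aux_repeated_root_not_scalar hAns hα0 hfac hn.ne' hc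
    · have key : ∀ m : ℕ, ((QuotientGroup.mk M : PGL2 k) ^ m = 1) ↔ (α / β) ^ m = 1 := by
        intro m
        rw [hpowiff m, aux_pow_scalar_iff hAns hfac hαβ m, div_pow,
          div_eq_one_iff_eq (pow_ne_zero m hβ0)]
      have hfd : f ((M : Matrix (Fin 2) (Fin 2) k).det) = α * β := by
        rw [← hdetm, ← hdet]
      have hft : f ((M : Matrix (Fin 2) (Fin 2) k).trace) = α + β := by
        rw [← htrm, ← htr]
      refine ⟨α / β, ⟨(key n).mp (by rw [← hg]; exact pow_orderOf_eq_one _),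
        fun m hm => by rw [← hg]; exact orderOf_dvd_of_pow_eq_one ((key m).mpr hm)⟩, ?_⟩
      refine ⟨(((M : Matrix (Fin 2) (Fin 2) k).trace) ^ 2 -
        2 * ((M : Matrix (Fin 2) (Fin 2) k).det)) / ((M : Matrix (Fin 2) (Fin 2) k).det), ?_⟩
      rw [map_div₀, map_sub, map_pow, _root_.map_mul, map_ofNat, hfd, hft]
      field_simp
      ring
  tfae_have 3 → 2
  · intro hcond
    set K := AlgebraicClosure k with hK
    set f := algebraMap k K with hf
    haveI : CharZero K := charZero_of_injective_algebraMap f.injective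
    obtain ⟨ζ, hζ, hmem⟩ := hcond
    obtain ⟨c, hc⟩ := RingHom.mem_range.mp hmem
    have hζ0 : ζ ≠ 0 := by
      intro h
      have := hζ.pow_eq_one
      rw [h, zero_pow hn.ne'] at this
      exact zero_ne_one this
    -- the common reflection for small cases
    have hBu : (!![(0:k),1;1,0] : Matrix (Fin 2) (Fin 2) k) * !![0,1;1,0] = 1 := by
      rw [Matrix.mul_fin_two, Matrix.one_fin_two]
      norm_num
    set Bu : GL (Fin 2) k := ⟨!![0,1;1,0], !![0,1;1,0], hBu, hBu⟩ with hBudef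
    have hBuval : (Bu : Matrix (Fin 2) (Fin 2) k) = !![0,1;1,0] := rfl
    have hbu2 : (QuotientGroup.mk Bu : PGL2 k) * QuotientGroup.mk Bu = 1 := by
      rw [← QuotientGroup.mk_mul, QuotientGroup.eq_one_iff, aux_mem_center_GL2_iff]
      exact ⟨1, by rw [Units.val_mul, hBuval, hBu, one_smul]⟩
    have hbune : (QuotientGroup.mk Bu : PGL2 k) ≠ 1 := by
      intro h
      obtain ⟨cc, hcc⟩ := (aux_mk_eq_one_iff Bu).mp h
      have := congrFun (congrFun (hBuval ▸ hcc) 0) 1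
      simp [Matrix.smul_apply, Matrix.one_apply] at this
    rcases lt_or_ge n 3 with h3 | h3
    · interval_cases n
      · -- n = 1
        refine aux_exists_dihedral hn (a := (1 : PGL2 k)) (b := QuotientGroup.mk Bu)
          orderOf_one hbu2 (by group) ?_
        intro m h
        rw [one_pow] at h
        exact hbune h
      · -- n = 2
        have hA2 : (!![(1:k),0;0,-1] : Matrix (Fin 2) (Fin 2) k) * !![1,0;0,-1] = 1 := by
          rw [Matrix.mul_fin_two, Matrix.one_fin_two]
          norm_num
        set A2 : GL (Fin 2) k := ⟨!![1,0;0,-1], !![1,0;0,-1], hA2, hA2⟩ with hA2def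
        have hA2val : (A2 : Matrix (Fin 2) (Fin 2) k) = !![1,0;0,-1] := rfl
        set a : PGL2 k := QuotientGroup.mk A2 with hadef
        set b : PGL2 k := QuotientGroup.mk Bu with hbdef
        have ha2 : a * a = 1 := by
          rw [hadef, ← QuotientGroup.mk_mul, QuotientGroup.eq_one_iff, aux_mem_center_GL2_iff]
          exact ⟨1, by rw [Units.val_mul, hA2val, hA2, one_smul]⟩
        have hane : a ≠ 1 := by
          intro h
          obtain ⟨cc, hcc⟩ := (aux_mk_eq_one_iff A2).mp h
          have h1 := congrFun (congrFun (hA2val ▸ hcc) 0) 0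
          have h2 := congrFun (congrFun (hA2val ▸ hcc) 1) 1
          simp [Matrix.smul_apply, Matrix.one_apply] at h1 h2
          rw [← h1] at h2
          norm_num at h2
        haveI : Fact (Nat.Prime 2) := ⟨by norm_num⟩
        have haord : orderOf a = 2 := by
          apply orderOf_eq_prime _ hane
          rw [pow_two]
          exact ha2
        have hainv : a⁻¹ = a := by
          rw [inv_eq_iff_mul_eq_one, ha2]
        have hbainv : b * a * b⁻¹ = a⁻¹ := by
          have hE : (QuotientGroup.mk (Bu * A2 * Bu * A2) : PGL2 k) = 1 := by
            rw [QuotientGroup.eq_one_iff, aux_mem_center_GL2_iff]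
            refine ⟨-1, ?_⟩
            rw [Units.val_mul, Units.val_mul, Units.val_mul, hA2val, hBuval]
            ext i j
            fin_cases i <;> fin_cases j <;>
              simp [Matrix.mul_apply, Fin.sum_univ_two, Matrix.one_apply]
          have hE2 : b * a * b * a = 1 := by
            rw [hbdef, hadef, ← QuotientGroup.mk_mul, ← QuotientGroup.mk_mul,
              ← QuotientGroup.mk_mul]
            exact hE
          have hbinv : b⁻¹ = b := by
            rw [inv_eq_iff_mul_eq_one, hbu2]
          rw [hbinv, eq_inv_iff_mul_eq_one]
          exact hE2
        have hnot : ∀ m : ℕ, b ≠ a ^ m := by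
          intro m h
          rcases Nat.even_or_odd m with ⟨t, ht⟩ | ⟨t, ht⟩
          · rw [ht, ← two_mul, pow_mul, pow_two, ha2, one_pow] at h
            exact hbune h
          · rw [ht, pow_add, pow_mul, pow_two, ha2, one_pow, one_mul, pow_one] at h
            -- b = a
            have : b * a = 1 := by rw [h, ha2]
            rw [hbdef, hadef, ← QuotientGroup.mk_mul] at this
            obtain ⟨cc, hcc⟩ := (aux_mk_eq_one_iff _).mp this
            rw [Units.val_mul, hA2val, hBuval] at hcc
            have h1 := congrFun (congrFun hcc 1) 0
            simp [Matrix.mul_apply, Fin.sum_univ_two, Matrix.smul_apply,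
              Matrix.one_apply] at h1
        exact aux_exists_dihedral hn haord hbu2 hbainv hnot
    · -- n ≥ 3
      have hpow2 : ¬ ((n:ℕ) ∣ 2) := by
        intro h
        have := Nat.le_of_dvd (by norm_num) h
        omega
      have hζm1 : ζ ≠ -1 := by
        intro h
        apply hpow2
        apply hζ.dvd_of_pow_eq_one
        rw [h]
        norm_num
      have hζsq : ζ ≠ ζ⁻¹ := by
        intro h
        apply hpow2
        apply hζ.dvd_of_pow_eq_one
        rw [pow_two]
        nth_rewrite 2 [h]
        exact mul_inv_cancel₀ hζ0
      set s : k := c + 2 with hsdef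
      have hfs : f s = ζ + ζ⁻¹ + 2 := by
        rw [hsdef, map_add, hc, map_ofNat]
      have hfs0 : f s ≠ 0 := by
        intro h0
        rw [hfs] at h0
        have hsq : (ζ + 1) ^ 2 = ζ * (ζ + ζ⁻¹ + 2) := by
          field_simp
          ring
        rw [h0, mul_zero, pow_eq_zero_iff (by norm_num : (2:ℕ) ≠ 0)] at hsq
        exact hζm1 (eq_neg_of_add_eq_zero_left hsq)
      have hs0 : s ≠ 0 := by
        intro h
        rw [h, map_zero] at hfs0
        exact hfs0 rfl
      have hAval : (!![(0:k),-s;1,s] : Matrix (Fin 2) (Fin 2) k) * !![1,1;-(s⁻¹),0] = 1 := by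
        rw [Matrix.mul_fin_two, Matrix.one_fin_two]
        congr 1 <;> field_simp <;> simp
      have hAval' : (!![(1:k),1;-(s⁻¹),0] : Matrix (Fin 2) (Fin 2) k) * !![0,-s;1,s] = 1 := by
        rw [Matrix.mul_fin_two, Matrix.one_fin_two]
        congr 1 <;> field_simp <;> simp
      set A : GL (Fin 2) k := ⟨!![0,-s;1,s], !![1,1;-(s⁻¹),0], hAval, hAval'⟩ with hAdef
      have hAv : (A : Matrix (Fin 2) (Fin 2) k) = !![0,-s;1,s] := rfl
      have hBval : (!![(1:k),s;0,-1] : Matrix (Fin 2) (Fin 2) k) * !![1,s;0,-1] = 1 := by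
        rw [Matrix.mul_fin_two, Matrix.one_fin_two]
        norm_num
      set B : GL (Fin 2) k := ⟨!![1,s;0,-1], !![1,s;0,-1], hBval, hBval⟩ with hBdef
      have hBv : (B : Matrix (Fin 2) (Fin 2) k) = !![1,s;0,-1] := rfl
      set a : PGL2 k := QuotientGroup.mk A with hadef
      set b : PGL2 k := QuotientGroup.mk B with hbdef
      set Abar : Matrix (Fin 2) (Fin 2) K := ((A : Matrix (Fin 2) (Fin 2) k)).map f with hAbar
      have hAbarv : Abar = !![0, -(f s); 1, f s] := by
        rw [hAbar, hAv]
        ext i j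
        fin_cases i <;> fin_cases j <;> simp [Matrix.map_apply]
      have htrA : Abar.trace = f s := by
        rw [hAbarv, Matrix.trace_fin_two]
        simp
      have hdetA : Abar.det = f s := by
        rw [hAbarv, Matrix.det_fin_two]
        simp
      set α : K := 1 + ζ with hαdef
      set β : K := 1 + ζ⁻¹ with hβdef
      have hβ0 : β ≠ 0 := by
        intro h
        apply hζm1
        rw [hβdef] at h
        have : ζ⁻¹ = -1 := by linear_combination h
        rw [← inv_inv ζ, this]
        norm_num
      have hαβsum : α + β = f s := by
        rw [hαdef, hβdef, hfs]
        ring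
      have hαβprod : α * β = f s := by
        rw [hαdef, hβdef, hfs]
        field_simp
        linear_combination (-(1 + ζ)) * mul_inv_cancel₀ hζ0
      have hαβ : α ≠ β := by
        intro h
        apply hζsq
        rw [hαdef, hβdef] at h
        exact add_left_cancel h
      have hζβ : α = ζ * β := by
        rw [hαdef, hβdef, mul_add, mul_one, mul_inv_cancel₀ hζ0]
        ring
      have hfac : Abar.charpoly = (X - C α) * (X - C β) := by
        rw [aux_charpoly_fin_two, htrA, hdetA]
        nth_rewrite 1 [← hαβsum]
        rw [← hαβprod]
        simp only [C_add, C_mul]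
        ring
      have hAns : ∀ cc : K, Abar ≠ cc • 1 := by
        intro cc h
        have := congrFun (congrFun (hAbarv ▸ h) 1) 0
        simp [Matrix.smul_apply, Matrix.one_apply] at this
      have hmp : ∀ m : ℕ, Abar ^ m = (((A : Matrix (Fin 2) (Fin 2) k)) ^ m).map f := by
        intro m
        rw [hAbar, ← RingHom.mapMatrix_apply, ← RingHom.mapMatrix_apply, map_pow]
      have hpowiff : ∀ m : ℕ, (a ^ m = 1) ↔ ∃ cc : K, Abar ^ m = cc • 1 := by
        intro m
        rw [hadef, aux_pow_mk_eq_one_iff A m]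
        constructor
        · rintro ⟨cc, hcc⟩
          exact (hmp m).symm ▸ ((aux_scalar_map_iff f _).mpr ⟨cc, hcc⟩)
        · rintro ⟨cc, hcc⟩
          rw [hmp m] at hcc
          exact (aux_scalar_map_iff f _).mp ⟨cc, hcc⟩
      have key : ∀ m : ℕ, (a ^ m = 1) ↔ ζ ^ m = 1 := by
        intro m
        rw [hpowiff m, aux_pow_scalar_iff hAns hfac hαβ m]
        constructor
        · intro h
          rw [hζβ, mul_pow] at h
          have h' : ζ ^ m * β ^ m = 1 * β ^ m := by rw [one_mul]; exact h
          exact mul_right_cancel₀ (pow_ne_zero m hβ0) h'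
        · intro h
          rw [hζβ, mul_pow, h, one_mul]
      have haord : orderOf a = n := by
        apply Nat.dvd_antisymm
        · exact orderOf_dvd_of_pow_eq_one ((key n).mpr hζ.pow_eq_one)
        · exact hζ.dvd_of_pow_eq_one _ ((key (orderOf a)).mp (pow_orderOf_eq_one a))
      have hb2 : b * b = 1 := by
        rw [hbdef, ← QuotientGroup.mk_mul, QuotientGroup.eq_one_iff, aux_mem_center_GL2_iff]
        exact ⟨1, by rw [Units.val_mul, hBv, hBval, one_smul]⟩
      have hbinv : b⁻¹ = b := by
        rw [inv_eq_iff_mul_eq_one, hb2]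
      have hconj : b * a * b⁻¹ = a⁻¹ := by
        have hE : (QuotientGroup.mk (B * A * B * A) : PGL2 k) = 1 := by
          rw [QuotientGroup.eq_one_iff, aux_mem_center_GL2_iff]
          refine ⟨s, ?_⟩
          rw [Units.val_mul, Units.val_mul, Units.val_mul, hAv, hBv]
          ext i j
          fin_cases i <;> fin_cases j <;>
            simp [Matrix.mul_apply, Fin.sum_univ_two, Matrix.one_apply] <;> ring
        have hE2 : b * a * b * a = 1 := by
          rw [hbdef, hadef, ← QuotientGroup.mk_mul, ← QuotientGroup.mk_mul,
            ← QuotientGroup.mk_mul]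
          exact hE
        rw [hbinv, eq_inv_iff_mul_eq_one]
        exact hE2
      have hnot : ∀ m : ℕ, b ≠ a ^ m := by
        intro m h
        have hcomm : b * a = a * b := by
          rw [h, ← pow_succ, ← pow_succ']
        have : a⁻¹ = a := by
          rw [← hconj, hcomm, mul_assoc, mul_inv_cancel, mul_one]
        have ha2 : a ^ 2 = 1 := by
          rw [pow_two]
          nth_rewrite 1 [← this]
          rw [inv_mul_cancel]
        have := orderOf_dvd_of_pow_eq_one ha2
        rw [haord] at this
        exact hpow2 this
      exact aux_exists_dihedral hn haord hb2 hconj hnot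
  tfae_finish
end

section
/- Let k be a field of characteristic zero and let PGL₂(k) denote the quotient of GL₂(k) by its center. Then PGL₂(k) contains an element of order 5 if and only if there exists x ∈ k with x² = 5. -/
open Matrix

lemma scalar_central {k : Type*} [Field k] (A : Matrix.GeneralLinearGroup (Fin 2) k)
    (c : k) (h : (A : Matrix (Fin 2) (Fin 2) k) = c • 1) :
    A ∈ Subgroup.center (Matrix.GeneralLinearGroup (Fin 2) k) := by
  rw [Subgroup.mem_center_iff]
  intro g
  ext i j
  simp [Units.val_mul, h, smul_mul_assoc, mul_smul_comm]

theorem pgl2_order_five_iff_sqrt5 (k : Type*) [Field k] [CharZero k] :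
    (∃ g : PGL2 k, orderOf g = 5) ↔ ∃ x : k, x ^ 2 = 5 := by
  constructor
  · rintro ⟨g, hg⟩
    obtain ⟨A, rfl⟩ := QuotientGroup.mk_surjective g
    have h5 : (QuotientGroup.mk A : PGL2 k) ^ 5 = 1 := by
      rw [← hg]; exact pow_orderOf_eq_one _
    have hA5 : A ^ 5 ∈ Subgroup.center (Matrix.GeneralLinearGroup (Fin 2) k) := by
      rwa [← QuotientGroup.mk_pow, QuotientGroup.eq_one_iff] at h5
    have hA1 : A ∉ Subgroup.center (Matrix.GeneralLinearGroup (Fin 2) k) := by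
      intro h
      have h1 : (QuotientGroup.mk A : PGL2 k) = 1 := (QuotientGroup.eq_one_iff _).2 h
      rw [h1, orderOf_one] at hg
      norm_num at hg
    set M : Matrix (Fin 2) (Fin 2) k := (A : Matrix (Fin 2) (Fin 2) k) with hMdef
    set a := M 0 0 with ha; set b := M 0 1 with hb; set c := M 1 0 with hc
    set e := M 1 1 with he
    have hM : M = !![a, b; c, e] := Matrix.etaExpand_eq M |>.symm
    have hd : a * e - b * c ≠ 0 := by
      have hdet : IsUnit M.det := (isUnit_iff_isUnit_det M).1 ⟨A, rfl⟩
      rw [Matrix.det_fin_two] at hdet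
      exact hdet.ne_zero
    have hdU : (!![(1:k),1;0,1]).det ≠ 0 := by simp [Matrix.det_fin_two]
    have hdV : (!![(1:k),0;1,1]).det ≠ 0 := by simp [Matrix.det_fin_two]
    have hUval : ((Matrix.GeneralLinearGroup.mkOfDetNeZero _ hdU :
        Matrix.GeneralLinearGroup (Fin 2) k) : Matrix (Fin 2) (Fin 2) k)
        = !![(1:k),1;0,1] := rfl
    have hVval : ((Matrix.GeneralLinearGroup.mkOfDetNeZero _ hdV :
        Matrix.GeneralLinearGroup (Fin 2) k) : Matrix (Fin 2) (Fin 2) k)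
        = !![(1:k),0;1,1] := rfl
    have hU : !![(1:k),1;0,1] * M ^ 5 = M ^ 5 * !![(1:k),1;0,1] := by
      have h := Subgroup.mem_center_iff.mp hA5 (Matrix.GeneralLinearGroup.mkOfDetNeZero _ hdU)
      have h2 := congrArg Units.val h
      simp only [Units.val_mul, Units.val_pow_eq_pow_val, hUval] at h2
      exact h2
    have hV : !![(1:k),0;1,1] * M ^ 5 = M ^ 5 * !![(1:k),0;1,1] := by
      have h := Subgroup.mem_center_iff.mp hA5 (Matrix.GeneralLinearGroup.mkOfDetNeZero _ hdV)
      have h2 := congrArg Units.val h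
      simp only [Units.val_mul, Units.val_pow_eq_pow_val, hVval] at h2
      exact h2
    have h10 : (M ^ 5) 1 0 = 0 := by
      have := Matrix.ext_iff.mpr hU 0 0
      simpa [Matrix.mul_apply, Fin.sum_univ_two] using this
    have h01 : (M ^ 5) 0 1 = 0 := by
      have := Matrix.ext_iff.mpr hV 0 0
      simpa [Matrix.mul_apply, Fin.sum_univ_two] using this
    have hdg : (M ^ 5) 1 1 = (M ^ 5) 0 0 := by
      have := Matrix.ext_iff.mpr hU 0 1
      simp [Matrix.mul_apply, Fin.sum_univ_two] at this
      linear_combination this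
    set P : k := (a + e) ^ 4 - 3 * (a + e) ^ 2 * (a * e - b * c) + (a * e - b * c) ^ 2 with hP
    have e01 : (M ^ 5) 0 1 = b * P := by
      rw [hM]
      simp [pow_succ, Matrix.mul_fin_two, hP]
      ring
    have e10 : (M ^ 5) 1 0 = c * P := by
      rw [hM]
      simp [pow_succ, Matrix.mul_fin_two, hP]
      ring
    have ed : (M ^ 5) 0 0 - (M ^ 5) 1 1 = (a - e) * P := by
      rw [hM]
      simp [pow_succ, Matrix.mul_fin_two, hP]
      ring
    have hPz : P = 0 := by
      by_contra hP0
      have hb0 : b = 0 := by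
        have : b * P = 0 := by rw [← e01, h01]
        rcases mul_eq_zero.mp this with h | h
        · exact h
        · exact absurd h hP0
      have hc0 : c = 0 := by
        have : c * P = 0 := by rw [← e10, h10]
        rcases mul_eq_zero.mp this with h | h
        · exact h
        · exact absurd h hP0
      have hae : a = e := by
        have : (a - e) * P = 0 := by rw [← ed, hdg]; ring
        rcases mul_eq_zero.mp this with h | h
        · exact sub_eq_zero.mp h
        · exact absurd h hP0
      refine hA1 (scalar_central A a ?_)
      rw [← hMdef, hM, hb0, hc0, ← hae]
      ext i j
      fin_cases i <;> fin_cases j <;> simp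
    refine ⟨(2 * (a + e) ^ 2 - 3 * (a * e - b * c)) / (a * e - b * c), ?_⟩
    rw [div_pow, div_eq_iff (pow_ne_zero 2 hd)]
    linear_combination (4 : k) * hPz
  · rintro ⟨x, hx⟩
    obtain ⟨φ, hφ⟩ : ∃ φ : k, φ ^ 2 = φ + 1 :=
      ⟨(1 + x) / 2, by field_simp; linear_combination hx⟩
    have hdM : (!![(0:k),-1;1,φ]).det ≠ 0 := by simp [Matrix.det_fin_two]
    set A := Matrix.GeneralLinearGroup.mkOfDetNeZero _ hdM with hA
    have hval : (A : Matrix (Fin 2) (Fin 2) k) = !![(0:k),-1;1,φ] := rfl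
    have h00 : (!![(0:k),-1;1,φ]) ^ 5 = !![(-1:k),0;0,-1] := by
      ext i j
      fin_cases i <;> fin_cases j <;> simp [pow_succ, Matrix.mul_fin_two]
      · linear_combination (-φ - 1) * hφ
      · linear_combination (-(φ^2 + φ - 1)) * hφ
      · linear_combination (φ^2 + φ - 1) * hφ
      · linear_combination (φ^3 + φ^2 - 2*φ - 1) * hφ
    have hA5 : A ^ 5 = -1 := by
      apply Units.ext
      rw [Units.val_pow_eq_pow_val, hval, h00, Units.val_neg, Units.val_one]
      ext i j
      fin_cases i <;> fin_cases j <;> simp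
    refine ⟨QuotientGroup.mk A, ?_⟩
    haveI : Fact (Nat.Prime 5) := ⟨by norm_num⟩
    apply orderOf_eq_prime
    · rw [← QuotientGroup.mk_pow, QuotientGroup.eq_one_iff, hA5]
      rw [Subgroup.mem_center_iff]
      intro g
      rw [mul_neg_one, neg_one_mul]
    · intro h1
      rw [QuotientGroup.eq_one_iff] at h1
      have hdU : (!![(1:k),1;0,1]).det ≠ 0 := by simp [Matrix.det_fin_two]
      have hUval : ((Matrix.GeneralLinearGroup.mkOfDetNeZero _ hdU :
          Matrix.GeneralLinearGroup (Fin 2) k) : Matrix (Fin 2) (Fin 2) k)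
          = !![(1:k),1;0,1] := rfl
      have h := Subgroup.mem_center_iff.mp h1 (Matrix.GeneralLinearGroup.mkOfDetNeZero _ hdU)
      have h2 := congrArg Units.val h
      simp only [Units.val_mul, hUval, hval] at h2
      have h3 := Matrix.ext_iff.mpr h2 0 0
      simp [Matrix.mul_apply, Fin.sum_univ_two] at h3
end

section
/- Let k be a field of characteristic zero in which −1 is not a square (there is no x ∈ k with x² = −1). Let h be an invertible 2×2 matrix over k such that h⁴ is a scalar matrix but h² is not a scalar matrix (i.e. the image of h in PGL₂(k) has order 4). Then the characteristic polynomial of h has no root in k; equivalently, it is irreducible over k. -/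
open Polynomial Matrix


/-- Let `k` be a field of characteristic zero in which `-1`
is not a square, and let `h ∈ GL₂(k)` be such that `h⁴` is scalar but `h²` is
not (so the image of `h` in `PGL₂(k)` has order 4).  Then the characteristic
polynomial of `h` has no root in `k`; equivalently, it is irreducible over `k`. -/
theorem charpoly_irreducible_of_order_four (k : Type*) [Field k] [CharZero k]
    (hk : ¬∃ x : k, x ^ 2 = -1) (h : Matrix.GeneralLinearGroup (Fin 2) k)
    (h4 : ∃ c : k, ((h ^ 4 : Matrix.GeneralLinearGroup (Fin 2) k) :
        Matrix (Fin 2) (Fin 2) k) = c • (1 : Matrix (Fin 2) (Fin 2) k))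
    (h2 : ¬∃ c : k, ((h ^ 2 : Matrix.GeneralLinearGroup (Fin 2) k) :
        Matrix (Fin 2) (Fin 2) k) = c • (1 : Matrix (Fin 2) (Fin 2) k)) :
    (¬∃ x : k, ((h : Matrix (Fin 2) (Fin 2) k).charpoly).IsRoot x) ∧
      Irreducible ((h : Matrix (Fin 2) (Fin 2) k).charpoly) := by
  set M : Matrix (Fin 2) (Fin 2) k := (h : Matrix (Fin 2) (Fin 2) k) with hM
  set t : k := Matrix.trace M with ht
  set d : k := M.det with hd
  -- basic facts
  have hdet : d ≠ 0 := by
    have : IsUnit M := h.isUnit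
    rw [Matrix.isUnit_iff_isUnit_det] at this
    exact this.ne_zero
  have hch : M.charpoly = X ^ 2 - C t * X + C d := by
    rw [Matrix.charpoly, Matrix.det_fin_two]
    simp [Matrix.charmatrix_apply, Matrix.trace_fin_two, Matrix.det_fin_two, ht, hd]
    ring
  -- Cayley--Hamilton
  have hCH : M ^ 2 = t • M - d • (1 : Matrix (Fin 2) (Fin 2) k) := by
    have := M.aeval_self_charpoly
    rw [hch] at this
    simp [Algebra.algebraMap_eq_smul_one] at this
    rw [eq_sub_iff_add_eq, ← sub_eq_zero]
    rw [sub_eq_add_neg] at this ⊢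
    convert this using 1
    abel
  have hM4 : M ^ 4 = (t ^ 3 - 2 * t * d) • M
      + (d ^ 2 - t ^ 2 * d) • (1 : Matrix (Fin 2) (Fin 2) k) := by
    have h4' : M ^ 4 = (M ^ 2) * (M ^ 2) := by rw [← pow_add]
    rw [h4', hCH, sub_mul, mul_sub, mul_sub, smul_mul_smul_comm, smul_mul_smul_comm,
      smul_mul_smul_comm, smul_mul_smul_comm, mul_one, one_mul,
      show M * M = M ^ 2 from (sq M).symm, hCH, smul_sub, smul_smul, smul_smul]
    simp only [mul_one]
    module
  obtain ⟨c, hc⟩ := h4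
  have hc' : M ^ 4 = c • (1 : Matrix (Fin 2) (Fin 2) k) := by
    rw [← hc, hM]; push_cast; rfl
  -- h² not scalar, transported to M
  have h2' : ∀ c : k, M ^ 2 ≠ c • (1 : Matrix (Fin 2) (Fin 2) k) := by
    intro c hcontra
    exact h2 ⟨c, by rw [hM] at hcontra; rw [← hcontra]; push_cast; rfl⟩
  -- key: t * (t^2 - 2*d) = 0, and t ≠ 0
  have hs : t ^ 3 - 2 * t * d = 0 := by
    by_contra hs
    apply h2' ((( t ^ 3 - 2 * t * d)⁻¹ * (c - (d ^ 2 - t ^ 2 * d))) ^ 2)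
    have hMscalar : M = ((t ^ 3 - 2 * t * d)⁻¹ * (c - (d ^ 2 - t ^ 2 * d))) •
        (1 : Matrix (Fin 2) (Fin 2) k) := by
      have h1 : (t ^ 3 - 2 * t * d) • M + (d ^ 2 - t ^ 2 * d) •
          (1 : Matrix (Fin 2) (Fin 2) k) = c • (1 : Matrix (Fin 2) (Fin 2) k) := by
        rw [← hM4, hc']
      have h2 : (t ^ 3 - 2 * t * d) • M = (c - (d ^ 2 - t ^ 2 * d)) •
          (1 : Matrix (Fin 2) (Fin 2) k) := by
        rw [sub_smul c (d ^ 2 - t ^ 2 * d), ← h1]; abel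
      calc M = (t ^ 3 - 2 * t * d)⁻¹ • ((t ^ 3 - 2 * t * d) • M) := by
              rw [smul_smul, inv_mul_cancel₀ hs, one_smul]
        _ = _ := by rw [h2, smul_smul]
    rw [hMscalar, _root_.smul_pow, one_pow]
  have htne : t ≠ 0 := by
    intro ht0
    apply h2' (-d)
    rw [hCH, ht0, zero_smul, zero_sub, neg_smul]
  have htd : t ^ 2 = 2 * d := by
    have : t * (t ^ 2 - 2 * d) = 0 := by linear_combination hs
    rcases mul_eq_zero.mp this with h | h
    · exact absurd h htne
    · linear_combination h
  -- no root
  have noroot : ¬∃ x : k, ((h : Matrix (Fin 2) (Fin 2) k).charpoly).IsRoot x := by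
    rintro ⟨x, hx⟩
    rw [← hM, hch] at hx
    simp [IsRoot] at hx
    apply hk
    refine ⟨(2 * x - t) / t, ?_⟩
    field_simp
    linear_combination 4 * hx + 2 * htd
  refine ⟨noroot, ?_⟩
  rw [Polynomial.irreducible_iff_roots_eq_zero_of_degree_le_three]
  · rw [Multiset.eq_zero_iff_forall_notMem]
    intro x hx
    exact noroot ⟨x, ((Polynomial.mem_roots M.charpoly_monic.ne_zero).mp hx)⟩
  · rw [M.charpoly_natDegree_eq_dim]; simp
  · rw [M.charpoly_natDegree_eq_dim]; simp
end

section
/- Let k be a field of characteristic zero that contains no primitive cube root of unity (there is no x ∈ k with x² + x + 1 = 0). Let h be an invertible 2×2 matrix over k such that h³ is a scalar matrix but h itself is not a scalar matrix (i.e. the image of h in PGL₂(k) has order 3). Then the characteristic polynomial of h has no root in k; equivalently, it is irreducible over k. -/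
open Polynomial

private lemma charpoly_fin_two' {k : Type*} [Field k] (A : Matrix (Fin 2) (Fin 2) k) :
    A.charpoly = X ^ 2 - C A.trace * X + C A.det := by
  rw [Matrix.charpoly, Matrix.det_fin_two, Matrix.charmatrix_apply_eq,
    Matrix.charmatrix_apply_eq, Matrix.charmatrix_apply_ne _ _ _ (by decide),
    Matrix.charmatrix_apply_ne _ _ _ (by decide), Matrix.trace_fin_two, Matrix.det_fin_two]
  simp only [map_add, map_mul, map_sub]
  ring

/-- Let `k` be a field of characteristic zero containing no
primitive cube root of unity, and let `h ∈ GL₂(k)` be such that `h³` is scalar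
but `h` is not (so the image of `h` in `PGL₂(k)` has order 3).  Then the
characteristic polynomial of `h` has no root in `k`; equivalently, it is
irreducible over `k`. -/
theorem charpoly_irreducible_of_order_three (k : Type*) [Field k] [CharZero k]
    (hk : ¬∃ x : k, x ^ 2 + x + 1 = 0) (h : Matrix.GeneralLinearGroup (Fin 2) k)
    (h3 : ∃ c : k, ((h ^ 3 : Matrix.GeneralLinearGroup (Fin 2) k) :
        Matrix (Fin 2) (Fin 2) k) = c • (1 : Matrix (Fin 2) (Fin 2) k))
    (h1 : ¬∃ c : k, ((h : Matrix (Fin 2) (Fin 2) k)) = c • (1 : Matrix (Fin 2) (Fin 2) k)) :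
    (¬∃ x : k, ((h : Matrix (Fin 2) (Fin 2) k).charpoly).IsRoot x) ∧
      Irreducible ((h : Matrix (Fin 2) (Fin 2) k).charpoly) := by
  set A : Matrix (Fin 2) (Fin 2) k := (h : Matrix (Fin 2) (Fin 2) k) with hA
  set t : k := A.trace with ht
  set d : k := A.det with hd
  obtain ⟨c, hc⟩ := h3
  rw [show ((h ^ 3 : Matrix.GeneralLinearGroup (Fin 2) k) : Matrix (Fin 2) (Fin 2) k)
      = A ^ 3 from Units.val_pow_eq_pow_val h 3] at hc
  -- Cayley–Hamilton for 2×2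
  have hsq : A ^ 2 = t • A - d • 1 := by
    have hCH := A.aeval_self_charpoly
    rw [charpoly_fin_two'] at hCH
    simp only [map_add, map_sub, map_mul, map_pow, Polynomial.aeval_X, Polynomial.aeval_C,
      Algebra.algebraMap_eq_smul_one, smul_mul_assoc, one_mul] at hCH
    rw [← sub_eq_zero, ← hCH]; abel
  have hcube : A ^ 3 = (t * t - d) • A - (t * d) • 1 := by
    rw [pow_succ, hsq, sub_mul, smul_mul_assoc, smul_mul_assoc, one_mul, ← pow_two, hsq,
      smul_sub, smul_smul]
    rw [sub_smul, mul_smul, smul_smul t d]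
    abel
  have hdet : d ≠ 0 := by
    have : IsUnit A.det := (Matrix.isUnit_iff_isUnit_det A).mp h.isUnit
    exact this.ne_zero
  -- From A³ scalar and A not scalar: t² = d
  have hkey : t * t = d := by
    by_contra hne
    apply h1
    refine ⟨(t * t - d)⁻¹ * (c + t * d), ?_⟩
    have h2 : (t * t - d) • A = (c + t * d) • (1 : Matrix (Fin 2) (Fin 2) k) := by
      rw [hcube] at hc
      rw [add_smul, ← hc]; abel
    have hne' : t * t - d ≠ 0 := sub_ne_zero.mpr hne
    calc A = (t * t - d)⁻¹ • ((t * t - d) • A) := by rw [smul_smul, inv_mul_cancel₀ hne', one_smul]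
    _ = ((t * t - d)⁻¹ * (c + t * d)) • (1 : Matrix (Fin 2) (Fin 2) k) := by
        rw [h2, smul_smul]
  have htne : t ≠ 0 := fun h0 => hdet (by rw [← hkey, h0, mul_zero])
  have hnoroot : ¬∃ x : k, ((h : Matrix (Fin 2) (Fin 2) k).charpoly).IsRoot x := by
    rintro ⟨x, hx⟩
    rw [← hA, charpoly_fin_two'] at hx
    simp only [IsRoot, eval_add, eval_sub, eval_pow, eval_mul, eval_X, eval_C] at hx
    apply hk
    refine ⟨-(x * t⁻¹), ?_⟩
    have h0 : x ^ 2 - t * x + t * t = 0 := by rw [hkey]; exact hx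
    have h2 : (-(x * t⁻¹)) ^ 2 + (-(x * t⁻¹)) + 1 = (x ^ 2 - t * x + t * t) * (t⁻¹ * t⁻¹) := by
      have hct : t * t⁻¹ = 1 := mul_inv_cancel₀ htne
      linear_combination (x * t⁻¹ - 1 - t * t⁻¹) * hct
    rw [h2, h0, zero_mul]
  refine ⟨hnoroot, ?_⟩
  have hmonic := (h : Matrix (Fin 2) (Fin 2) k).charpoly_monic
  have hdeg : ((h : Matrix (Fin 2) (Fin 2) k).charpoly).natDegree = 2 := by
    rw [Matrix.charpoly_natDegree_eq_dim, Fintype.card_fin]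
  rw [hmonic.irreducible_iff_roots_eq_zero_of_degree_le_three (by omega) (by omega)]
  rw [Multiset.eq_zero_iff_forall_notMem]
  intro x hx
  exact hnoroot ⟨x, (mem_roots hmonic.ne_zero).mp hx⟩
end
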